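/- arXiv:1610.04633 — 10 statements merged into one kernel-verified Lean document; each statement's English description precedes it below -/
import Mathlib

section
/- Let D be a degree on the ordinal S. For all ordinals a, b, c < S with b < a: if c has degree a, then c has degree b. -/
open Ordinal Set

noncomputable section

/-- The set of limit points of a set `X` of ordinals: the limit ordinals `c` such that
`X ∩ c` is unbounded in `c`. -/
def limPts (X : Set Ordinal) : Set Ordinal :=
  {c | Order.IsSuccLimit c ∧ ∀ b < c, ∃ x ∈ X, b < x ∧ x < c}

/-- `D` is a degree on the ordinal `S`.  For `c, a < S`, `D c a` reads "`c` has degree `a`". -/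
structure IsDegree (S : Ordinal) (D : Ordinal → Ordinal → Prop) : Prop where
  /-- every `c < S` has degree `0` -/
  deg_zero : ∀ c < S, D c 0
  /-- `0` only has degree `0` -/
  zero_only : ∀ a < S, D 0 a → a = 0
  /-- for a limit `a`, `c` has degree `a` iff it has every degree less than `a` -/
  limit : ∀ a < S, Order.IsSuccLimit a → ∀ c < S, (D c a ↔ ∀ b < a, D c b)
  /-- the successor condition -/
  succ : ∀ a, a + 1 < S →
      {c | c < S ∧ D c (a + 1)} = limPts {c | c < S ∧ D c a} ∩ {c | c < S} ∨
      ∃ d ≤ a, d < S ∧ Order.IsSuccLimit d ∧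
        {c | c < S ∧ D c (a + 1)} =
          (limPts {c | c < S ∧ D c a} ∪ {c | (c < S ∧ D c a) ∧ c ≤ d}) ∩ {c | c < S}

/-- The set of candidate values for the collapsing function `C(a,b)`: ordinals `c < S`
above `b` having some degree `a' ≥ a`. -/
def CSet (S : Ordinal) (D : Ordinal → Ordinal → Prop) (a b : Ordinal) : Set Ordinal :=
  {c | c < S ∧ b < c ∧ ∃ a', a ≤ a' ∧ a' < S ∧ D c a'}

/-- `C(a,b)` is defined iff some candidate value exists. -/
def CDefined (S : Ordinal) (D : Ordinal → Ordinal → Prop) (a b : Ordinal) : Prop :=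
  (CSet S D a b).Nonempty

/-- The collapsing function `C(a,b)`: the least element of `CSet S D a b`
(meaningful when `CDefined S D a b`). -/
def Cval (S : Ordinal) (D : Ordinal → Ordinal → Prop) (a b : Ordinal) : Ordinal :=
  sInf (CSet S D a b)

/-- `a` is maximal in `C(a,b)`: `C(a,b)` is defined and has no degree strictly greater
than `a`. -/
def CMaximal (S : Ordinal) (D : Ordinal → Ordinal → Prop) (a b : Ordinal) : Prop :=
  CDefined S D a b ∧ ∀ a', a < a' → a' < S → ¬ D (Cval S D a b) a'

/-- `b` is minimal in `C(a,b)`: `C(a,b)` is defined and `C(a,b') < C(a,b)` for every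
`b' < b`. -/
def CMinimal (S : Ordinal) (D : Ordinal → Ordinal → Prop) (a b : Ordinal) : Prop :=
  CDefined S D a b ∧ ∀ b' < b, Cval S D a b' < Cval S D a b

end

lemma key (S : Ordinal) (D : Ordinal → Ordinal → Prop)
    (hz : ∀ c < S, D c 0)
    (hl : ∀ a < S, Order.IsSuccLimit a → ∀ c < S, (D c a ↔ ∀ b < a, D c b))
    (hs : ∀ a, a + 1 < S →
      {c | c < S ∧ D c (a + 1)} = limPts {c | c < S ∧ D c a} ∩ {c | c < S} ∨
      ∃ d ≤ a, d < S ∧ Order.IsSuccLimit d ∧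
        {c | c < S ∧ D c (a + 1)} =
          (limPts {c | c < S ∧ D c a} ∪ {c | (c < S ∧ D c a) ∧ c ≤ d}) ∩ {c | c < S}) :
    ∀ a, a < S →
      (∀ c, c < S → c ∈ limPts {x | x < S ∧ D x a} → D c a) ∧
      (∀ c, c < S → D c a → ∀ b < a, D c b) := by
  intro a
  induction a using Ordinal.induction with
  | h a IH =>
  intro ha
  rcases Ordinal.zero_or_succ_or_isSuccLimit a with rfl | ⟨a', rfl⟩ | hlim
  · exact ⟨fun c hc _ => hz c hc, fun c _ _ b hb => absurd hb (not_lt_zero (a := b))⟩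
  · rw [← Ordinal.add_one_eq_succ] at *
    have ha' : a' < S := lt_trans (lt_add_one a') ha
    have IH' := IH a' (lt_add_one a') ha'
    -- in both cases of hs, membership in C_{a'+1} gives D c a' (for c < S)
    have step : ∀ c, c < S → D c (a' + 1) → D c a' := by
      intro c hc hca
      rcases hs a' ha with heq | ⟨d, _, _, _, heq⟩
      · have : c ∈ limPts {x | x < S ∧ D x a'} ∩ {c | c < S} := by
          rw [← heq]; exact ⟨hc, hca⟩
        exact IH'.1 c hc this.1
      · have : c ∈ (limPts {x | x < S ∧ D x a'} ∪ {x | (x < S ∧ D x a') ∧ x ≤ d})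
            ∩ {c | c < S} := by rw [← heq]; exact ⟨hc, hca⟩
        rcases this.1 with h1 | h1
        · exact IH'.1 c hc h1
        · exact h1.1.2
    constructor
    · intro c hc hlp
      -- c is a limit point of C_{a'+1}; show c ∈ limPts C_{a'}
      have hlp' : c ∈ limPts {x | x < S ∧ D x a'} := by
        refine ⟨hlp.1, fun b hb => ?_⟩
        obtain ⟨x, hx, hbx, hxc⟩ := hlp.2 b hb
        exact ⟨x, ⟨hx.1, step x hx.1 hx.2⟩, hbx, hxc⟩
      rcases hs a' ha with heq | ⟨d, _, _, _, heq⟩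
      · have : c ∈ {x | x < S ∧ D x (a' + 1)} := by rw [heq]; exact ⟨hlp', hc⟩
        exact this.2
      · have : c ∈ {x | x < S ∧ D x (a' + 1)} := by
          rw [heq]; exact ⟨Or.inl hlp', hc⟩
        exact this.2
    · intro c hc hca b hb
      have hba' : b ≤ a' := by
        rwa [Ordinal.add_one_eq_succ, Order.lt_succ_iff] at hb
      have hda' : D c a' := step c hc hca
      rcases lt_or_eq_of_le hba' with hlt | rfl
      · exact IH'.2 c hc hda' b hlt
      · exact hda'
  · constructor
    · intro c hc hlp
      rw [hl a ha hlim c hc]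
      intro b hb
      have hbS : b < S := lt_trans hb ha
      refine (IH b hb hbS).1 c hc ⟨hlp.1, fun e he => ?_⟩
      obtain ⟨x, hx, hex, hxc⟩ := hlp.2 e he
      exact ⟨x, ⟨hx.1, (hl a ha hlim x hx.1).mp hx.2 b hb⟩, hex, hxc⟩
    · intro c hc hca b hb
      exact (hl a ha hlim c hc).mp hca b hb

theorem degree_mono (S : Ordinal) (D : Ordinal → Ordinal → Prop) (hD : IsDegree S D)
    (a b c : Ordinal) (ha : a < S) (hb : b < S) (hc : c < S) (hba : b < a) (h : D c a) :
    D c b := by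
  exact (key S D hD.deg_zero hD.limit hD.succ a ha).2 c hc h b hba
end

section
/- Let D be a degree on the ordinal S and let a, b < S with 0 < a ≤ b. Then b has degree a if and only if there exist ordinals c and d with d ≥ a and b = c + ω^d. -/
open Ordinal Set

/-- Every nonzero ordinal is of the form `c + ω ^ d`. -/
lemma exists_last_exp : ∀ b : Ordinal, b ≠ 0 → ∃ c d : Ordinal, b = c + omega0 ^ d := by
  intro b
  induction b using Ordinal.induction with
  | _ b IH =>
  intro hb
  set l := Ordinal.log omega0 b with hl
  set r := b % omega0 ^ l with hr
  set q := b / omega0 ^ l with hq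
  have hmod : omega0 ^ l * q + r = b := Ordinal.div_add_mod b (omega0 ^ l)
  rcases eq_or_ne r 0 with hr0 | hr0
  · -- b = ω^l * q, with 0 < q < ω
    have hqlt : q < omega0 := Ordinal.div_opow_log_lt b one_lt_omega0
    have hqpos : q ≠ 0 := by
      intro h
      rw [h, mul_zero, zero_add, hr0] at hmod
      exact hb hmod.symm
    obtain ⟨n, hn⟩ := Ordinal.lt_omega0.1 hqlt
    obtain ⟨m, rfl⟩ : ∃ m : ℕ, n = m + 1 := by
      cases n with
      | zero => exact absurd hn (by simpa using hqpos)
      | succ m => exact ⟨m, rfl⟩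
    refine ⟨omega0 ^ l * m, l, ?_⟩
    rw [← hmod, hr0, add_zero, hn]
    push_cast
    rw [mul_add, mul_one]
  · have hrlt : r < b := Ordinal.mod_opow_log_lt_self omega0 hb
    obtain ⟨c, d, hcd⟩ := IH r hrlt hr0
    exact ⟨omega0 ^ l * q + c, d, by rw [← hmod, hcd, add_assoc]⟩

lemma add_opow_lt {c d d' y : Ordinal} (hdd : d < d') (hy : y < c + omega0 ^ d') :
    y + omega0 ^ d < c + omega0 ^ d' := by
  rcases lt_or_ge y c with h | h
  · calc y + omega0 ^ d ≤ c + omega0 ^ d := add_le_add_left h.le _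
    _ < c + omega0 ^ d' := (add_lt_add_iff_left _).2 ((opow_lt_opow_iff_right one_lt_omega0).2 hdd)
  · obtain ⟨z, rfl⟩ : ∃ z, y = c + z := ⟨y - c, (Ordinal.add_sub_cancel_of_le h).symm⟩
    have hz : z < omega0 ^ d' := by
      have := hy
      rwa [add_lt_add_iff_left] at this
    rw [add_assoc]
    exact (add_lt_add_iff_left _).2 (principal_add_omega0_opow d' hz
      ((opow_lt_opow_iff_right one_lt_omega0).2 hdd))

/-- Uniqueness of the last exponent. -/
lemma last_exp_unique {c d c' d' : Ordinal} (h : c + omega0 ^ d = c' + omega0 ^ d') :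
    d = d' := by
  by_contra hne
  rcases lt_or_gt_of_ne hne with hlt | hlt
  · have hc : c < c' + omega0 ^ d' := by
      rw [← h]; exact lt_add_of_pos_right c (opow_pos d omega0_pos)
    exact absurd (h ▸ add_opow_lt hlt hc) (lt_irrefl _)
  · have hc : c' < c + omega0 ^ d := by
      rw [h]; exact lt_add_of_pos_right c' (opow_pos d' omega0_pos)
    exact absurd (h.symm ▸ add_opow_lt hlt hc) (lt_irrefl _)

lemma limPts_char {S : Ordinal} {D : Ordinal → Ordinal → Prop} {a : Ordinal}
    (IH : ∀ y, a ≤ y → y < S → y ≠ 0 → (D y a ↔ ∃ c d, a ≤ d ∧ y = c + omega0 ^ d))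
    {b : Ordinal} (hb : a + 1 ≤ b) (hbS : b < S) :
    b ∈ limPts {c | c < S ∧ D c a} ↔ ∃ c d, a + 1 ≤ d ∧ b = c + omega0 ^ d := by
  have hab : a < b := lt_of_lt_of_le (lt_add_one a) hb
  constructor
  · rintro ⟨hblim, hub⟩
    obtain ⟨c, d, hcd⟩ := exists_last_exp b hblim.ne_bot
    refine ⟨c, d, ?_, hcd⟩
    by_contra hd
    push_neg at hd
    have hd : d ≤ a := by
      rw [Ordinal.add_one_eq_succ] at hd; exact Order.lt_succ_iff.mp hd
    have hcb : c < b := by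
      rw [hcd]; exact lt_add_of_pos_right c (opow_pos d omega0_pos)
    obtain ⟨y, ⟨hyS, hyD⟩, hxy, hyb⟩ := hub (max c a) (max_lt hcb hab)
    have hay : a < y := lt_of_le_of_lt (le_max_right c a) hxy
    have hcy : c < y := lt_of_le_of_lt (le_max_left c a) hxy
    obtain ⟨c'', d'', hd'', hy⟩ := (IH y hay.le hyS hay.ne_bot).1 hyD
    obtain ⟨z, hz⟩ : ∃ z, y = c + z := ⟨y - c, (Ordinal.add_sub_cancel_of_le hcy.le).symm⟩
    have hz0 : z ≠ 0 := by rintro rfl; rw [hz, add_zero] at hcy; exact lt_irrefl _ hcy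
    have hzlt : z < omega0 ^ d := by
      have : c + z < c + omega0 ^ d := by rw [← hz, ← hcd]; exact hyb
      rwa [add_lt_add_iff_left] at this
    obtain ⟨z₀, e, hze⟩ := exists_last_exp z hz0
    have he : e = d'' := last_exp_unique
      (show (c + z₀) + omega0 ^ e = c'' + omega0 ^ d'' by rw [add_assoc, ← hze, ← hz]; exact hy)
    have h1 : omega0 ^ a ≤ z := by
      calc omega0 ^ a ≤ omega0 ^ e := by
            rw [he]; exact opow_le_opow_right omega0_pos hd''
      _ ≤ z₀ + omega0 ^ e := le_add_self
      _ = z := hze.symm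
    have h2 : z < omega0 ^ a := lt_of_lt_of_le hzlt (opow_le_opow_right omega0_pos hd)
    exact absurd h1 (not_le.2 h2)
  · rintro ⟨c, d, hd, rfl⟩
    have had : a < d := lt_of_lt_of_le (lt_add_one a) hd
    constructor
    · exact isSuccLimit_add c (isSuccLimit_opow_left isSuccLimit_omega0 (ne_of_gt (lt_of_le_of_lt (zero_le (a := a)) had)))
    · intro x hx
      set t := max (max x a) c with ht
      have htb : t < c + omega0 ^ d := max_lt (max_lt hx hab) (lt_add_of_pos_right c (opow_pos d omega0_pos))
      have hct : c ≤ t := le_max_right _ _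
      obtain ⟨s, hs⟩ : ∃ s, t = c + s := ⟨t - c, (Ordinal.add_sub_cancel_of_le hct).symm⟩
      have hslt : s < omega0 ^ d := by
        have := htb; rw [hs, add_lt_add_iff_left] at this; exact this
      refine ⟨t + omega0 ^ a, ⟨?_, ?_⟩, ?_, ?_⟩
      · -- t + ω^a < S
        refine lt_trans ?_ hbS
        rw [hs, add_assoc]
        exact (add_lt_add_iff_left _).2 (principal_add_omega0_opow d hslt
          ((opow_lt_opow_iff_right one_lt_omega0).2 had))
      · -- D (t + ω^a) a
        have hySb : t + omega0 ^ a < c + omega0 ^ d := by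
          rw [hs, add_assoc]
          exact (add_lt_add_iff_left _).2 (principal_add_omega0_opow d hslt
            ((opow_lt_opow_iff_right one_lt_omega0).2 had))
        have hyS : t + omega0 ^ a < S := lt_trans hySb hbS
        have hay : a ≤ t + omega0 ^ a :=
          le_trans (le_max_right x a) (le_trans (le_max_left _ c) le_self_add)
        have hy0 : t + omega0 ^ a ≠ 0 := by
          intro h
          exact absurd h (ne_of_gt (lt_of_lt_of_le (opow_pos a omega0_pos) le_add_self))
        exact (IH _ hay hyS hy0).2 ⟨t, a, le_refl a, rfl⟩
      · exact lt_of_le_of_lt (le_trans (le_max_left x a) (le_max_left _ c))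
          (lt_add_of_pos_right t (opow_pos a omega0_pos))
      · rw [hs, add_assoc]
        exact (add_lt_add_iff_left _).2 (principal_add_omega0_opow d hslt
          ((opow_lt_opow_iff_right one_lt_omega0).2 had))

lemma main_char {S : Ordinal} {D : Ordinal → Ordinal → Prop} (hD : IsDegree S D) :
    ∀ a, a < S → ∀ b, a ≤ b → b < S → b ≠ 0 →
      (D b a ↔ ∃ c d, a ≤ d ∧ b = c + omega0 ^ d) := by
  intro a
  induction a using Ordinal.induction with
  | _ a IH =>
  intro haS b hab hbS hb0
  rcases Ordinal.zero_or_succ_or_isSuccLimit a with rfl | ⟨a', rfl⟩ | hlim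
  · constructor
    · intro _
      obtain ⟨c, d, hcd⟩ := exists_last_exp b hb0
      exact ⟨c, d, zero_le (a := d), hcd⟩
    · intro _; exact hD.deg_zero b hbS
  · -- successor case
    rw [← add_one_eq_succ] at *
    have ha'S : a' < S := lt_trans (lt_add_one a') haS
    have IH' : ∀ y, a' ≤ y → y < S → y ≠ 0 →
        (D y a' ↔ ∃ c d, a' ≤ d ∧ y = c + omega0 ^ d) :=
      fun y => IH a' (lt_add_one a') ha'S y
    have hmem : D b (a' + 1) ↔ b ∈ limPts {c | c < S ∧ D c a'} := by
      rcases hD.succ a' haS with heq | ⟨d, hda, _, _, heq⟩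
      · constructor
        · intro h
          have : b ∈ {c | c < S ∧ D c (a' + 1)} := ⟨hbS, h⟩
          rw [heq] at this
          exact this.1
        · intro h
          have : b ∈ limPts {c | c < S ∧ D c a'} ∩ {c | c < S} := ⟨h, hbS⟩
          rw [← heq] at this
          exact this.2
      · constructor
        · intro h
          have : b ∈ {c | c < S ∧ D c (a' + 1)} := ⟨hbS, h⟩
          rw [heq] at this
          rcases this.1 with h' | h'
          · exact h'
          · exact absurd h'.2 (not_le.2 (lt_of_lt_of_le (lt_of_le_of_lt hda (lt_add_one a')) hab))
        · intro h
          have : b ∈ (limPts {c | c < S ∧ D c a'} ∪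
              {c | (c < S ∧ D c a') ∧ c ≤ d}) ∩ {c | c < S} := ⟨Or.inl h, hbS⟩
          rw [← heq] at this
          exact this.2
    rw [hmem]
    exact limPts_char IH' hab hbS
  · -- limit case
    rw [hD.limit a haS hlim b hbS]
    constructor
    · intro h
      obtain ⟨c, d, hcd⟩ := exists_last_exp b hb0
      refine ⟨c, d, ?_, hcd⟩
      by_contra hda
      push_neg at hda
      have hd1 : d + 1 < a := hlim.succ_lt hda
      obtain ⟨c', d', hd', hb'⟩ := (IH (d + 1) hd1 (lt_trans hd1 haS) b
        (le_trans hd1.le hab) hbS hb0).1 (h (d + 1) hd1)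
      have : d' = d := last_exp_unique (by rw [← hb', ← hcd])
      rw [this] at hd'
      exact absurd hd' (not_le.2 (lt_add_one d))
    · rintro ⟨c, d, hd, rfl⟩ a' ha'
      exact (IH a' ha' (lt_trans ha' haS) _ (le_trans ha'.le hab) hbS hb0).2
        ⟨c, d, le_trans ha'.le hd, rfl⟩


theorem degree_iff_add_omega_pow (S : Ordinal) (D : Ordinal → Ordinal → Prop)
    (hD : IsDegree S D) (a b : Ordinal) (ha : a < S) (hb : b < S)
    (ha0 : 0 < a) (hab : a ≤ b) :
    D b a ↔ ∃ c d : Ordinal, a ≤ d ∧ b = c + omega0 ^ d := by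
  have hb0 : b ≠ 0 := ne_of_gt (lt_of_lt_of_le ha0 hab)
  exact main_char hD a ha b hab hb hb0
end

section
/- Let D be a degree on the ordinal S and let a, b < S be such that C(a,b) is defined. Then C(a,b) = b + ω^a if and only if C(a,b) ≥ a. -/
open Ordinal Set

section helpers
lemma wpow_pos (a : Ordinal) : 0 < omega0 ^ a := opow_pos a omega0_pos

lemma add_wpow_eq (b a : Ordinal) :
    b + omega0 ^ a = omega0 ^ a * (b / omega0 ^ a + 1) := by
  conv_lhs => rw [← Ordinal.div_add_mod b (omega0 ^ a)]
  rw [mul_add, mul_one, add_assoc,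
    add_omega0_opow (Ordinal.mod_lt b (wpow_pos a).ne')]

lemma wpow_dvd_add_wpow (b a : Ordinal) : omega0 ^ a ∣ b + omega0 ^ a :=
  ⟨_, add_wpow_eq b a⟩

lemma add_wpow_le_of_dvd {a b c : Ordinal} (hd : omega0 ^ a ∣ c) (hb : b < c) :
    b + omega0 ^ a ≤ c := by
  obtain ⟨k, rfl⟩ := hd
  rw [add_wpow_eq]
  have hq : b / omega0 ^ a < k := (Ordinal.div_lt (wpow_pos a).ne').2 hb
  exact mul_le_mul_right (by rwa [add_one_eq_succ, Order.succ_le_iff]) _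

lemma add_wpow_lt_of_dvd {a b c : Ordinal} (hd : omega0 ^ (a + 1) ∣ c) (hb : b < c) :
    b + omega0 ^ a < c :=
  lt_of_lt_of_le
    (add_lt_add_right ((opow_lt_opow_iff_right one_lt_omega0).2 (lt_add_one a)) b)
    (add_wpow_le_of_dvd hd hb)

lemma dvd_add_right_ord {d u v : Ordinal} (hu : d ∣ u) (huv : d ∣ u + v) : d ∣ v := by
  rcases eq_or_ne d 0 with rfl | hd
  · rw [zero_dvd_iff] at hu huv
    subst hu; simpa using huv
  obtain ⟨s, rfl⟩ := hu
  obtain ⟨t, ht⟩ := huv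
  have hst : s ≤ t := by
    have : d * s ≤ d * t := by rw [← ht]; exact le_self_add
    exact (mul_le_mul_iff_of_pos_left (pos_iff_ne_zero.2 hd)).1 this
  refine ⟨t - s, ?_⟩
  rw [Ordinal.mul_sub, ← ht, Ordinal.add_sub_cancel]

lemma limPts_mono {X Y : Set Ordinal} (h : X ⊆ Y) : limPts X ⊆ limPts Y := by
  rintro c ⟨hc, hu⟩
  exact ⟨hc, fun b hb => by obtain ⟨x, hx, h1, h2⟩ := hu b hb; exact ⟨x, h hx, h1, h2⟩⟩

lemma limPts_limPts {X : Set Ordinal} : limPts (limPts X) ⊆ limPts X := by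
  rintro c ⟨hc, hu⟩
  refine ⟨hc, fun b hb => ?_⟩
  obtain ⟨y, ⟨hyl, hyu⟩, h1, h2⟩ := hu b hb
  obtain ⟨x, hx, hx1, hx2⟩ := hyu b h1
  exact ⟨x, hx, hx1, hx2.trans h2⟩

lemma limPts_union {X Y : Set Ordinal} : limPts (X ∪ Y) ⊆ limPts X ∪ limPts Y := by
  rintro c ⟨hc, hu⟩
  by_cases hX : ∀ b < c, ∃ x ∈ X, b < x ∧ x < c
  · exact Or.inl ⟨hc, hX⟩
  push_neg at hX
  obtain ⟨b0, hb0, hb0'⟩ := hX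
  refine Or.inr ⟨hc, fun b hb => ?_⟩
  obtain ⟨x, hx, h1, h2⟩ := hu (max b b0) (max_lt hb hb0)
  rcases hx with hx | hx
  · exact absurd h2 (not_lt.2 (by simpa using hb0' x hx ((le_max_right b b0).trans_lt h1)))
  · exact ⟨x, hx, (le_max_left b b0).trans_lt h1, h2⟩
end helpers

variable {S : Ordinal} {D : Ordinal → Ordinal → Prop}

/-- Lemma A: every nonzero multiple of ω^a below S has degree a. -/
lemma degree_of_dvd (hD : IsDegree S D) :
    ∀ a < S, ∀ c < S, c ≠ 0 → omega0 ^ a ∣ c → D c a := by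
  intro a
  induction a using Ordinal.limitRecOn with
  | zero => exact fun _ c hc _ _ => hD.deg_zero c hc
  | add_one a ih =>
    intro haS c hcS hc0 hdvd
    have haS' : a < S := (lt_add_one a).trans haS
    have hw : omega0 ∣ omega0 ^ (a + 1) := by
      simpa [opow_one] using opow_dvd_opow omega0 (le_add_self (a := 1) (b := a))
    have hcl : Order.IsSuccLimit c := isSuccLimit_iff_omega0_dvd.2 ⟨hc0, hw.trans hdvd⟩
    have hmem : c ∈ limPts {c | c < S ∧ D c a} := by
      refine ⟨hcl, fun b hb => ?_⟩
      have hxc : b + omega0 ^ a < c := add_wpow_lt_of_dvd hdvd hb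
      have hx0 : b + omega0 ^ a ≠ 0 := ((wpow_pos a).trans_le le_add_self).ne'
      exact ⟨b + omega0 ^ a, ⟨hxc.trans hcS, ih haS' _ (hxc.trans hcS) hx0
        (wpow_dvd_add_wpow b a)⟩, lt_add_of_pos_right b (wpow_pos a), hxc⟩
    rcases hD.succ a haS with hs | ⟨d, _, _, _, hs⟩
    · exact (show c ∈ {c | c < S ∧ D c (a+1)} from hs ▸ ⟨hmem, hcS⟩).2
    · exact (show c ∈ {c | c < S ∧ D c (a+1)} from hs ▸ ⟨Or.inl hmem, hcS⟩).2
  | limit a hal ih =>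
    intro haS c hcS hc0 hdvd
    rw [hD.limit a haS hal c hcS]
    exact fun b hb => ih b hb (hb.trans haS) c hcS hc0
      ((opow_dvd_opow omega0 hb.le).trans hdvd)

/-- Degree classes are closed under limit points. -/
lemma degree_closed (hD : IsDegree S D) :
    ∀ a < S, ∀ c < S, c ∈ limPts {c | c < S ∧ D c a} → D c a := by
  intro a
  induction a using Ordinal.limitRecOn with
  | zero => exact fun _ c hc _ => hD.deg_zero c hc
  | add_one a ih =>
    intro haS c hcS hmem
    have key : c ∈ limPts {c | c < S ∧ D c a} := by
      rcases hD.succ a haS with hs | ⟨d, _, _, _, hs⟩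
      · exact limPts_limPts (limPts_mono (hs ▸ inter_subset_left) hmem)
      · have : c ∈ limPts (limPts {c | c < S ∧ D c a} ∪
            {c | (c < S ∧ D c a) ∧ c ≤ d}) :=
          limPts_mono (hs ▸ inter_subset_left) hmem
        rcases limPts_union this with h | h
        · exact limPts_limPts h
        · exact limPts_mono (fun x hx => hx.1) h
    rcases hD.succ a haS with hs | ⟨d, _, _, _, hs⟩
    · exact (show c ∈ {c | c < S ∧ D c (a+1)} from hs ▸ ⟨key, hcS⟩).2
    · exact (show c ∈ {c | c < S ∧ D c (a+1)} from hs ▸ ⟨Or.inl key, hcS⟩).2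
  | limit a hal ih =>
    intro haS c hcS hmem
    rw [hD.limit a haS hal c hcS]
    intro b hb
    refine ih b hb (hb.trans haS) c hcS (limPts_mono (fun x hx => ?_) hmem)
    exact ⟨hx.1, (hD.limit a haS hal x hx.1).1 hx.2 b hb⟩

/-- Degrees are downward closed. -/
lemma degree_mono_s2 (hD : IsDegree S D) :
    ∀ a < S, ∀ c < S, D c a → ∀ b ≤ a, D c b := by
  intro a
  induction a using Ordinal.limitRecOn with
  | zero =>
    intro _ c hc _ b hb
    obtain rfl := nonpos_iff_eq_zero.1 hb
    exact hD.deg_zero c hc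
  | add_one a ih =>
    intro haS c hcS hca b hb
    rcases eq_or_lt_of_le hb with rfl | hb
    · exact hca
    have hb' : b ≤ a := by rwa [add_one_eq_succ, Order.lt_succ_iff] at hb
    have haS' : a < S := (lt_add_one a).trans haS
    have hDa : D c a := by
      have hc : c ∈ {c | c < S ∧ D c (a + 1)} := ⟨hcS, hca⟩
      rcases hD.succ a haS with hs | ⟨d, _, _, _, hs⟩
      · exact degree_closed hD a haS' c hcS (hs ▸ hc).1
      · rcases (hs ▸ hc).1 with h | h
        · exact degree_closed hD a haS' c hcS h
        · exact h.1.2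
    exact ih haS' c hcS hDa b hb'
  | limit a hal ih =>
    intro haS c hcS hca b hb
    rcases eq_or_lt_of_le hb with rfl | hb
    · exact hca
    exact (hD.limit a haS hal c hcS).1 hca b hb

/-- Lemma B': if c ≥ a is positive and has degree a, then ω^a divides c. -/
lemma dvd_of_degree (hD : IsDegree S D) :
    ∀ a < S, ∀ c < S, 0 < c → a ≤ c → D c a → omega0 ^ a ∣ c := by
  intro a
  induction a using Ordinal.limitRecOn with
  | zero => intro _ c _ _ _ _; simpa using one_dvd c
  | add_one a ih =>
    intro haS c hcS hc0 hac hca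
    have haS' : a < S := (lt_add_one a).trans haS
    have hac' : a < c := (lt_add_one a).trans_le hac
    -- c is a limit point of C_a
    have hmem : c ∈ limPts {c | c < S ∧ D c a} := by
      have hc : c ∈ {c | c < S ∧ D c (a + 1)} := ⟨hcS, hca⟩
      rcases hD.succ a haS with hs | ⟨d, hda, _, _, hs⟩
      · exact (hs ▸ hc).1
      · rcases (hs ▸ hc).1 with h | h
        · exact h
        · exact absurd (h.2.trans hda) (not_le.2 hac')
    -- multiples of ω^a are unbounded in c
    have hub : ∀ b < c, ∃ x, omega0 ^ a ∣ x ∧ b < x ∧ x < c := by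
      intro b hb
      obtain ⟨x, ⟨hxS, hxa⟩, hx1, hx2⟩ := hmem.2 (max b a) (max_lt hb hac')
      have hax : a ≤ x := ((le_max_right b a).trans_lt hx1).le
      have hx0 : 0 < x := ((le_max_right b a).trans_lt hx1).trans_le' (zero_le (a := a))
      exact ⟨x, ih haS' x hxS hx0 hax hxa, (le_max_left b a).trans_lt hx1, hx2⟩
    -- hence ω^a ∣ c
    have hdvd : omega0 ^ a ∣ c := by
      by_contra hnd
      have hr : c % omega0 ^ a ≠ 0 := fun h => hnd (Ordinal.dvd_iff_mod_eq_zero.2 h)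
      have hqc : omega0 ^ a * (c / omega0 ^ a) < c := by
        conv_rhs => rw [← Ordinal.div_add_mod c (omega0 ^ a)]
        exact lt_add_of_pos_right _ (pos_iff_ne_zero.2 hr)
      obtain ⟨x, ⟨m, rfl⟩, hx1, hx2⟩ := hub _ hqc
      have hm : c / omega0 ^ a < m := (mul_lt_mul_iff_of_pos_left (wpow_pos a)).1 hx1
      have : c ≤ omega0 ^ a * m := by
        conv_lhs => rw [← Ordinal.div_add_mod c (omega0 ^ a)]
        calc omega0 ^ a * (c / omega0 ^ a) + c % omega0 ^ a
            ≤ omega0 ^ a * (c / omega0 ^ a) + omega0 ^ a :=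
              le_of_lt (add_lt_add_right (Ordinal.mod_lt c (wpow_pos a).ne') _)
          _ = omega0 ^ a * (c / omega0 ^ a + 1) := by rw [mul_add, mul_one]
          _ ≤ omega0 ^ a * m := mul_le_mul_right (by rwa [add_one_eq_succ, Order.succ_le_iff]) _
      exact absurd hx2 (not_lt.2 this)
    obtain ⟨q, rfl⟩ := hdvd
    -- q must be a limit ordinal (or we contradict unboundedness)
    have hq0 : q ≠ 0 := by rintro rfl; simp at hc0
    rcases Ordinal.zero_or_succ_or_isSuccLimit q with rfl | ⟨m, rfl⟩ | hql
    · exact absurd rfl hq0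
    · exfalso
      rw [← add_one_eq_succ] at *
      have hmq : omega0 ^ a * m < omega0 ^ a * (m + 1) :=
        (mul_lt_mul_iff_of_pos_left (wpow_pos a)).2 (lt_add_one m)
      obtain ⟨x, ⟨k, rfl⟩, hx1, hx2⟩ := hub _ hmq
      have hk : m < k := (mul_lt_mul_iff_of_pos_left (wpow_pos a)).1 hx1
      have : m + 1 ≤ k := by rwa [add_one_eq_succ, Order.succ_le_iff]
      exact absurd hx2 (not_lt.2 (mul_le_mul_right this _))
    · obtain ⟨t, rfl⟩ := (isSuccLimit_iff_omega0_dvd.1 hql).2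
      exact ⟨t, by rw [add_one_eq_succ, opow_succ, mul_assoc]⟩
  | limit a hal ih =>
    intro haS c hcS hc0 hac hca
    have hall : ∀ b < a, omega0 ^ b ∣ c := fun b hb =>
      ih b hb (hb.trans haS) c hcS hc0 (hb.le.trans hac)
        ((hD.limit a haS hal c hcS).1 hca b hb)
    by_contra hnd
    have hr : c % omega0 ^ a ≠ 0 := fun h => hnd (Ordinal.dvd_iff_mod_eq_zero.2 h)
    obtain ⟨b, hb, hrb⟩ := (lt_opow_of_isSuccLimit omega0_ne_zero hal).1 (Ordinal.mod_lt c (wpow_pos a).ne')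
    have h1 : omega0 ^ b ∣ omega0 ^ a * (c / omega0 ^ a) :=
      Dvd.dvd.mul_right (opow_dvd_opow omega0 hb.le) _
    have h2 : omega0 ^ b ∣ c % omega0 ^ a := by
      refine dvd_add_right_ord h1 ?_
      rw [Ordinal.div_add_mod]
      exact hall b hb
    exact absurd (Ordinal.le_of_dvd hr h2) (not_le.2 hrb)

theorem Cval_eq_add_omega_pow_iff (S : Ordinal) (D : Ordinal → Ordinal → Prop)
    (hD : IsDegree S D) (a b : Ordinal) (ha : a < S) (hb : b < S)
    (h : CDefined S D a b) :
    Cval S D a b = b + omega0 ^ a ↔ a ≤ Cval S D a b := by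
  obtain ⟨hCS, hbC, a', haa', ha'S, hDa'⟩ := csInf_mem h
  constructor
  · intro heq
    calc a ≤ omega0 ^ a := right_le_opow a one_lt_omega0
      _ ≤ b + omega0 ^ a := le_add_self
      _ = Cval S D a b := heq.symm
  · intro haC
    have hDa : D (Cval S D a b) a := degree_mono_s2 hD a' ha'S _ hCS hDa' a haa'
    have hC0 : 0 < Cval S D a b := (zero_le (a := b)).trans_lt hbC
    have hdvd : omega0 ^ a ∣ Cval S D a b := dvd_of_degree hD a ha _ hCS hC0 haC hDa
    have hge : b + omega0 ^ a ≤ Cval S D a b := add_wpow_le_of_dvd hdvd hbC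
    have hlt : b + omega0 ^ a < S := hge.trans_lt hCS
    have hx0 : b + omega0 ^ a ≠ 0 := ((wpow_pos a).trans_le le_add_self).ne'
    have hmem2 : b + omega0 ^ a ∈ CSet S D a b :=
      ⟨hlt, lt_add_of_pos_right b (wpow_pos a), a, le_refl a, ha,
        degree_of_dvd hD a ha _ hlt hx0 (wpow_dvd_add_wpow b a)⟩
    exact le_antisymm (csInf_le' hmem2) hge
end

section
/- Let D be a degree on the ordinal S. The collapsing function C is continuous in its first argument: if a < S is a limit ordinal and C(a,b) is defined, then C(a',b) is defined for every a' < a, and C(a,b) = sup_{a' < a} C(a',b). -/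
open Ordinal Set

-- KEY

-- key lemma: downward closure + closedness of degree sets
theorem deg_key (S : Ordinal) (D : Ordinal → Ordinal → Prop) (hD : IsDegree S D) :
    ∀ a, a < S →
      ((∀ b < a, ∀ c, c < S → D c a → D c b) ∧
       (∀ c, c < S → c ∈ limPts {c | c < S ∧ D c a} → D c a)) := by
  intro a
  induction a using Ordinal.induction with
  | _ a IH =>
  intro haS
  rcases Ordinal.zero_or_succ_or_isSuccLimit a with rfl | ⟨e, rfl⟩ | hlim
  · refine ⟨fun b hb => absurd hb (zero_le (a := b)).not_gt, fun c hc _ => hD.deg_zero c hc⟩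
  · have heS : e < S := lt_trans (Order.lt_succ e) haS
    have he1S : e + 1 < S := by rwa [Ordinal.add_one_eq_succ]
    have IHe := IH e (Order.lt_succ e) heS
    -- from the succ axiom: C_{e+1} ⊆ C_e
    have hsub : ∀ c, c < S → D c (Order.succ e) → D c e := by
      intro c hc hdc
      have hmem : c ∈ {c | c < S ∧ D c (e + 1)} := by
        rw [Ordinal.add_one_eq_succ]; exact ⟨hc, hdc⟩
      rcases hD.succ e he1S with heq | ⟨d, _, _, _, heq⟩
      · rw [heq] at hmem
        exact IHe.2 c hc hmem.1
      · rw [heq] at hmem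
        rcases hmem.1 with hl | hm
        · exact IHe.2 c hc hl
        · exact hm.1.2
    constructor
    · intro b hb c hc hdc
      have hbe : b ≤ e := Order.lt_succ_iff.mp hb
      have hde : D c e := hsub c hc hdc
      rcases lt_or_eq_of_le hbe with hlt | rfl
      · exact IHe.1 b hlt c hc hde
      · exact hde
    · intro c hc hcl
      -- c is a limit point of C_{succ e}; C_{succ e} ⊆ C_e so c ∈ limPts C_e
      have hcl' : c ∈ limPts {c | c < S ∧ D c e} := by
        refine ⟨hcl.1, fun b0 hb0 => ?_⟩
        obtain ⟨x, hx, hbx, hxc⟩ := hcl.2 b0 hb0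
        exact ⟨x, ⟨hx.1, hsub x hx.1 hx.2⟩, hbx, hxc⟩
      have : c ∈ {c | c < S ∧ D c (e + 1)} := by
        rcases hD.succ e he1S with heq | ⟨d, _, _, _, heq⟩
        · rw [heq]; exact ⟨hcl', hc⟩
        · rw [heq]; exact ⟨Or.inl hcl', hc⟩
      rw [Ordinal.add_one_eq_succ] at this
      exact this.2
  · constructor
    · intro b hb c hc hdc
      exact ((hD.limit a haS hlim c hc).mp hdc) b hb
    · intro c hc hcl
      refine (hD.limit a haS hlim c hc).mpr (fun b hb => ?_)
      have hbS : b < S := lt_trans hb haS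
      refine (IH b hb hbS).2 c hc ?_
      refine ⟨hcl.1, fun b0 hb0 => ?_⟩
      obtain ⟨x, hx, hbx, hxc⟩ := hcl.2 b0 hb0
      exact ⟨x, ⟨hx.1, ((hD.limit a haS hlim x hx.1).mp hx.2) b hb⟩, hbx, hxc⟩

-- downward closure of degrees, convenient form
theorem deg_mono (S : Ordinal) (D : Ordinal → Ordinal → Prop) (hD : IsDegree S D)
    {c a b : Ordinal} (hc : c < S) (haS : a < S) (hba : b ≤ a) (hd : D c a) : D c b := by
  rcases lt_or_eq_of_le hba with hlt | rfl
  · exact (deg_key S D hD a haS).1 b hlt c hc hd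
  · exact hd

theorem Cval_continuous_fst (S : Ordinal) (D : Ordinal → Ordinal → Prop)
    (hD : IsDegree S D) (a b : Ordinal) (ha : a < S) (halim : Order.IsSuccLimit a)
    (h : CDefined S D a b) :
    (∀ a' < a, CDefined S D a' b) ∧
      Cval S D a b = sSup ((fun a' => Cval S D a' b) '' Set.Iio a) := by
  have hc : Cval S D a b ∈ CSet S D a b := csInf_mem h
  obtain ⟨hcS, hbc, a₀, ha₀, ha₀S, hdeg⟩ := hc
  have part1 : ∀ a' < a, CDefined S D a' b := by
    intro a' ha'
    exact ⟨Cval S D a b, hcS, hbc, a₀, le_trans (le_of_lt ha') ha₀, ha₀S, hdeg⟩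
  refine ⟨part1, ?_⟩
  set f : Ordinal → Ordinal := fun a' => Cval S D a' b with hf
  set T : Set Ordinal := f '' Set.Iio a with hT
  have hfmem : ∀ a' < a, f a' ∈ CSet S D a' b := fun a' ha' => csInf_mem (part1 a' ha')
  have hfle : ∀ a' < a, f a' ≤ Cval S D a b := by
    intro a' ha'
    exact csInf_le (OrderBot.bddBelow _)
      ⟨hcS, hbc, a₀, le_trans (le_of_lt ha') ha₀, ha₀S, hdeg⟩
  have hfmono : ∀ a' a'', a' ≤ a'' → a'' < a → f a' ≤ f a'' := by
    intro a' a'' h12 h2a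
    refine csInf_le_csInf (OrderBot.bddBelow _) (part1 a'' h2a) ?_
    rintro x ⟨hx1, hx2, e, he1, he2, he3⟩
    exact ⟨hx1, hx2, e, le_trans h12 he1, he2, he3⟩
  have hTne : T.Nonempty := ⟨f 0, 0, halim.pos, rfl⟩
  have hTbdd : BddAbove T := by
    refine ⟨Cval S D a b, ?_⟩
    rintro x ⟨a', ha', rfl⟩
    exact hfle a' ha'
  set s : Ordinal := sSup T with hs
  have hsle : s ≤ Cval S D a b := by
    refine csSup_le hTne ?_
    rintro x ⟨a', ha', rfl⟩
    exact hfle a' ha'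
  have hsS : s < S := lt_of_le_of_lt hsle hcS
  have hbs : b < s := by
    have h0 : f 0 ∈ T := ⟨0, halim.pos, rfl⟩
    have := (hfmem 0 halim.pos).2.1
    exact lt_of_lt_of_le this (le_csSup hTbdd h0)
  -- show D s a
  have hDsa : D s a := by
    by_cases hatt : ∃ a' < a, f a' = s
    · -- sup attained
      obtain ⟨a1, ha1, hfa1⟩ := hatt
      refine (hD.limit a ha halim s hsS).mpr (fun b' hb' => ?_)
      set a2 := max a1 b' with ha2
      have ha2a : a2 < a := max_lt ha1 hb'
      have hle : f a2 = s := le_antisymm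
        (le_csSup hTbdd ⟨a2, ha2a, rfl⟩)
        (hfa1 ▸ hfmono a1 a2 (le_max_left _ _) ha2a)
      obtain ⟨hxS, hxb, e, he1, he2, he3⟩ := hfmem a2 ha2a
      rw [hle] at he3
      exact deg_mono S D hD hsS he2 (le_trans (le_max_right _ _) he1) he3
    · push_neg at hatt
      have hflt : ∀ a' < a, f a' < s := fun a' ha' =>
        lt_of_le_of_ne (le_csSup hTbdd ⟨a', ha', rfl⟩) (hatt a' ha')
      -- sup not attained: s is a limit point of each C_{b'}
      have hslim : Order.IsSuccLimit s := by
        rw [Ordinal.isSuccLimit_iff]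
        constructor
        · intro h0
          rw [h0] at hbs; exact absurd hbs (zero_le (a := b)).not_gt
        · refine Order.isSuccPrelimit_of_succ_lt (fun x hx => ?_)
          obtain ⟨t, ⟨a', ha', rfl⟩, hxt⟩ := exists_lt_of_lt_csSup hTne hx
          exact lt_of_le_of_lt (Order.succ_le_of_lt hxt) (hflt a' ha')
      refine (hD.limit a ha halim s hsS).mpr (fun b' hb' => ?_)
      refine (deg_key S D hD b' (lt_trans hb' ha)).2 s hsS ?_
      refine ⟨hslim, fun b0 hb0 => ?_⟩
      obtain ⟨t, ⟨a', ha', rfl⟩, hb0t⟩ := exists_lt_of_lt_csSup hTne hb0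
      set a2 := max a' (Order.succ b') with ha2def
      have ha2a : a2 < a := max_lt ha' (halim.succ_lt hb')
      have hlt1 : b0 < f a2 := lt_of_lt_of_le hb0t (hfmono a' a2 (le_max_left _ _) ha2a)
      have hlt2 : f a2 < s := hflt a2 ha2a
      obtain ⟨hxS, hxb, e, he1, he2, he3⟩ := hfmem a2 ha2a
      have : D (f a2) b' := by
        refine deg_mono S D hD hxS he2 ?_ he3
        exact le_trans (le_of_lt (Order.lt_succ b')) (le_trans (le_max_right _ _) he1)
      exact ⟨f a2, ⟨hxS, this⟩, hlt1, hlt2⟩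
  have hmem : s ∈ CSet S D a b := ⟨hsS, hbs, a, le_rfl, ha, hDsa⟩
  exact le_antisymm (csInf_le (OrderBot.bddBelow _) hmem) hsle
end

section
/- Let D be a degree on the ordinal S. Suppose b = C(c,d) where c is maximal in C(c,d), and suppose C(a,b) is defined. Then b is minimal in C(a,b) if and only if a ≤ c. -/
open Ordinal Set

theorem CMinimal_iff_le (S : Ordinal) (D : Ordinal → Ordinal → Prop)
    (hD : IsDegree S D) (a b c d : Ordinal) (hb : b = Cval S D c d)
    (hmax : CMaximal S D c d) (h : CDefined S D a b) :
    CMinimal S D a b ↔ a ≤ c := by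
  obtain ⟨hdefcd, hmax'⟩ := hmax
  have hbmem : b ∈ CSet S D c d := hb ▸ csInf_mem hdefcd
  obtain ⟨hbS, hdb, a', hca', ha'S, hDba'⟩ := hbmem
  have hCab : Cval S D a b ∈ CSet S D a b := csInf_mem h
  obtain ⟨-, hbC, -⟩ := hCab
  constructor
  · rintro ⟨-, hmin⟩
    by_contra hac
    push_neg at hac
    have hset : CSet S D a d = CSet S D a b := by
      ext e
      constructor
      · rintro ⟨heS, hde, a'', haa'', ha''S, hDe⟩
        refine ⟨heS, ?_, a'', haa'', ha''S, hDe⟩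
        rcases lt_trichotomy e b with hlt | heq | hgt
        · exfalso
          have hmem : e ∈ CSet S D c d :=
            ⟨heS, hde, a'', le_of_lt (lt_of_lt_of_le hac haa''), ha''S, hDe⟩
          have : b ≤ e := hb ▸ csInf_le' hmem
          exact absurd hlt (not_lt.2 this)
        · exfalso
          subst heq
          exact hmax' a'' (lt_of_lt_of_le hac haa'') ha''S (hb ▸ hDe)
        · exact hgt
      · rintro ⟨heS, hbe, rest⟩
        exact ⟨heS, lt_trans hdb hbe, rest⟩
    have := hmin d hdb
    rw [Cval, Cval, hset] at this
    exact lt_irrefl _ this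
  · intro hac
    refine ⟨h, fun b' hb' => ?_⟩
    have hmem : b ∈ CSet S D a b' := ⟨hbS, hb', a', le_trans hac hca', ha'S, hDba'⟩
    calc Cval S D a b' ≤ b := csInf_le' hmem
    _ < Cval S D a b := hbC
end

section
/- Let D be a degree on the ordinal S. If a is maximal in C(a,b), b ≤ d < S, and C(a,d) is defined, then a is maximal in C(a,d). -/
open Ordinal Set

lemma limPts_trans {Z X : Set Ordinal} (h : Z ⊆ limPts X ∪ X) : limPts Z ⊆ limPts X := by
  rintro c ⟨hc, hub⟩
  refine ⟨hc, fun b hb => ?_⟩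
  obtain ⟨z, hz, hbz, hzc⟩ := hub b hb
  rcases h hz with hzl | hzX
  · obtain ⟨x, hx, hbx, hxz⟩ := hzl.2 b hbz
    exact ⟨x, hx, hbx, hxz.trans hzc⟩
  · exact ⟨z, hzX, hbz, hzc⟩

lemma degree_aux (S : Ordinal) (D : Ordinal → Ordinal → Prop) (hD : IsDegree S D) :
    ∀ a, a < S →
      (∀ c, c < S → D c a → ∀ a', a' ≤ a → D c a') ∧
      (∀ c ∈ limPts {c | c < S ∧ D c a}, c < S → D c a) := by
  intro a
  induction a using Ordinal.induction with
  | h a IH =>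
  intro haS
  rcases Ordinal.zero_or_succ_or_isSuccLimit a with h0 | ⟨a₀, rfl⟩ | hlim
  · subst h0
    constructor
    · intro c hc _ a' ha'
      exact nonpos_iff_eq_zero.mp ha' ▸ hD.deg_zero c hc
    · intro c _ hc
      exact hD.deg_zero c hc
  · rw [← Ordinal.add_one_eq_succ] at *
    have ha₀S : a₀ < S := lt_trans (Order.lt_succ a₀) (Ordinal.add_one_eq_succ a₀ ▸ haS)
    have IH₀ := IH a₀ (Ordinal.add_one_eq_succ a₀ ▸ Order.lt_succ a₀) ha₀S
    have hsub : {c | c < S ∧ D c (a₀ + 1)} ⊆ {c | c < S ∧ D c a₀} := by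
      rcases hD.succ a₀ haS with heq | ⟨e, _, _, _, heq⟩
      · rw [heq]
        rintro c ⟨hcl, hcS⟩
        exact ⟨hcS, IH₀.2 c hcl hcS⟩
      · rw [heq]
        rintro c ⟨hcl | hcm, hcS⟩
        · exact ⟨hcS, IH₀.2 c hcl hcS⟩
        · exact ⟨hcS, hcm.1.2⟩
    constructor
    · intro c hc hDc a' ha'
      rcases eq_or_lt_of_le ha' with rfl | ha'
      · exact hDc
      · have : D c a₀ := (hsub ⟨hc, hDc⟩).2
        exact IH₀.1 c hc this a'
          (Order.lt_add_one_iff.mp (Ordinal.add_one_eq_succ a₀ ▸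
            (Ordinal.add_one_eq_succ a₀ ▸ ha')))
    · intro c hcl hcS
      have hlp : c ∈ limPts {c | c < S ∧ D c a₀} := by
        rcases hD.succ a₀ haS with heq | ⟨e, _, _, _, heq⟩
        · refine limPts_trans (Z := {c | c < S ∧ D c (a₀ + 1)}) ?_ hcl
          rw [heq]
          exact fun x hx => Or.inl hx.1
        · refine limPts_trans (Z := {c | c < S ∧ D c (a₀ + 1)}) ?_ hcl
          rw [heq]
          rintro x ⟨hx | hx, _⟩
          · exact Or.inl hx
          · exact Or.inr ⟨hx.1.1, hx.1.2⟩
      rcases hD.succ a₀ haS with heq | ⟨e, _, _, _, heq⟩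
      · exact ((Set.ext_iff.mp heq c).mpr ⟨hlp, hcS⟩).2
      · exact ((Set.ext_iff.mp heq c).mpr ⟨Or.inl hlp, hcS⟩).2
  · have hmono : ∀ c, c < S → D c a → ∀ a', a' ≤ a → D c a' := by
      intro c hc hDc a' ha'
      rcases eq_or_lt_of_le ha' with rfl | ha'
      · exact hDc
      · exact ((hD.limit a haS hlim c hc).mp hDc) a' ha'
    refine ⟨hmono, ?_⟩
    intro c hcl hcS
    refine (hD.limit a haS hlim c hcS).mpr ?_
    intro e he
    have heS : e < S := lt_trans he haS
    have : c ∈ limPts {c | c < S ∧ D c e} := by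
      refine limPts_trans (Z := {c | c < S ∧ D c a}) ?_ hcl
      intro x hx
      exact Or.inr ⟨hx.1, hmono x hx.1 hx.2 e he.le⟩
    exact (IH e he heS).2 c this hcS

theorem CMaximal_of_le (S : Ordinal) (D : Ordinal → Ordinal → Prop)
    (hD : IsDegree S D) (a b d : Ordinal) (hmax : CMaximal S D a b)
    (hbd : b ≤ d) (hd : d < S) (h : CDefined S D a d) :
    CMaximal S D a d := by
  obtain ⟨hdefb, hmaxb⟩ := hmax
  refine ⟨h, ?_⟩
  intro a'' ha'' ha''S hDc1
  set c1 := Cval S D a d with hc1def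
  have hc1mem : c1 ∈ CSet S D a d := csInf_mem h
  obtain ⟨hc1S, hdc1, a0, ha0, ha0S, hDa0⟩ := hc1mem
  have haS : a < S := lt_of_le_of_lt ha0 ha0S
  have aux := degree_aux S D hD
  -- c1 has degree a+1
  have ha1S : a + 1 < S := lt_of_le_of_lt (Order.add_one_le_iff.mpr ha'') ha''S
  have hDc1a1 : D c1 (a + 1) := (aux a'' ha''S).1 c1 hc1S hDc1 (a + 1)
    (Order.add_one_le_iff.mpr ha'')
  have hnotlim : c1 ∉ limPts {c | c < S ∧ D c a} := by
    rintro ⟨hl, hub⟩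
    obtain ⟨x, ⟨hxS, hxD⟩, hdx, hxc⟩ := hub d hdc1
    have : x ∈ CSet S D a d := ⟨hxS, hdx, a, le_rfl, haS, hxD⟩
    exact absurd (csInf_le' this) (not_le.mpr hxc)
  rcases hD.succ a ha1S with heq | ⟨e, hea, heS, helim, heq⟩
  · have : c1 ∈ limPts {c | c < S ∧ D c a} ∩ {c | c < S} :=
      heq ▸ (Set.mem_setOf_eq ▸ ⟨hc1S, hDc1a1⟩)
    exact hnotlim this.1
  · have hmem : c1 ∈ (limPts {c | c < S ∧ D c a} ∪
        {c | (c < S ∧ D c a) ∧ c ≤ e}) ∩ {c | c < S} :=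
      heq ▸ (Set.mem_setOf_eq ▸ ⟨hc1S, hDc1a1⟩)
    rcases hmem.1 with hl | ⟨⟨_, _⟩, hc1e⟩
    · exact hnotlim hl
    · -- c1 ≤ e; then c0 = Cval S D a b ≤ c1 ≤ e and c0 ∈ C_a, so D c0 (a+1)
      set c0 := Cval S D a b with hc0def
      have hc0mem : c0 ∈ CSet S D a b := csInf_mem hdefb
      obtain ⟨hc0S, hbc0, a1, ha1, ha1S', hDa1⟩ := hc0mem
      have hc1memb : c1 ∈ CSet S D a b :=
        ⟨hc1S, lt_of_le_of_lt hbd hdc1, a0, ha0, ha0S, hDa0⟩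
      have hc01 : c0 ≤ c1 := csInf_le' hc1memb
      have hDc0a : D c0 a := (aux a1 ha1S').1 c0 hc0S hDa1 a ha1
      have : c0 ∈ {c | c < S ∧ D c (a + 1)} := by
        rw [heq]
        exact ⟨Or.inr ⟨⟨hc0S, hDc0a⟩, le_trans hc01 hc1e⟩, hc0S⟩
      exact hmaxb (a + 1) (Order.lt_add_one_iff.mpr le_rfl) ha1S this.2
end

section
/- Let D be a degree on the ordinal S. If a is maximal in C(a,b) and C(c,d) is defined, then C(a,b) < C(c,d) if and only if C(a,b) ≤ d, or both b < C(c,d) and a < c. (Here c need not be maximal in C(c,d).) -/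
open Ordinal Set

theorem Cval_lt_iff (S : Ordinal) (D : Ordinal → Ordinal → Prop)
    (hD : IsDegree S D) (a b c d : Ordinal) (hmax : CMaximal S D a b)
    (h : CDefined S D c d) :
    Cval S D a b < Cval S D c d ↔
      Cval S D a b ≤ d ∨ (b < Cval S D c d ∧ a < c) := by
  obtain ⟨hdef, hno⟩ := hmax
  have hx : Cval S D a b ∈ CSet S D a b := csInf_mem hdef
  have hy : Cval S D c d ∈ CSet S D c d := csInf_mem h
  obtain ⟨hxS, hbx, a', haa', ha'S, hDx⟩ := hx
  obtain ⟨hyS, hdy, c', hcc', hc'S, hDy⟩ := hy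
  constructor
  · intro hxy
    rcases le_or_gt (Cval S D a b) d with hle | hgt
    · exact Or.inl hle
    · refine Or.inr ⟨hbx.trans hxy, ?_⟩
      by_contra hca
      push_neg at hca
      have hmem : Cval S D a b ∈ CSet S D c d :=
        ⟨hxS, hgt, a', hca.trans haa', ha'S, hDx⟩
      exact absurd (csInf_le' hmem) (not_le.2 hxy)
  · rintro (hle | ⟨hby, hac⟩)
    · exact hle.trans_lt hdy
    · have hmem : Cval S D c d ∈ CSet S D a b :=
        ⟨hyS, hby, c', hac.le.trans hcc', hc'S, hDy⟩
      have hle : Cval S D a b ≤ Cval S D c d := csInf_le' hmem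
      rcases hle.lt_or_eq with h1 | h1
      · exact h1
      · exact absurd (h1 ▸ hDy) (hno c' (hac.trans_le hcc') hc'S)
end

section
/- Let D be a degree on the ordinal S and let b < S. Suppose e = C(a_1,…,a_m;b) and f = C(c_1,…,c_n;b) (m, n ≥ 1) are standard representations over the same base b. Then a_m ≥ … ≥ a_2 ≥ a_1, and e < f if and only if the finite sequence (a_m,…,a_2,a_1) is lexicographically less than (c_n,…,c_2,c_1), where in the lexicographic order on finite sequences of ordinals a proper initial segment precedes any of its extensions. -/
open Ordinal Set

noncomputable section

/-- The nested value `C(a₁, C(a₂, …, C(aₘ, b)…))` for a list `[a₁, …, aₘ]` over base `b`. -/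
def CList (S : Ordinal) (D : Ordinal → Ordinal → Prop) : List Ordinal → Ordinal → Ordinal
  | [], b => b
  | a :: l, b => Cval S D a (CList S D l b)

/-- The representation `C(a₁, …, aₘ; b)` is standard: each `aᵢ` is maximal in
`C(aᵢ, C(a_{i+1}, …, aₘ; b))`, and for each `i < m` the inner value
`C(a_{i+1}, …, aₘ; b)` is minimal there. -/
def CListStandard (S : Ordinal) (D : Ordinal → Ordinal → Prop) : List Ordinal → Ordinal → Prop
  | [], _ => True
  | [a], b => CMaximal S D a b
  | a :: l, b => CListStandard S D l b ∧ CMaximal S D a (CList S D l b) ∧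
      CMinimal S D a (CList S D l b)

end

section AuxLemmas

variable (S : Ordinal) (D : Ordinal → Ordinal → Prop)

lemma cval_mem {a b : Ordinal} (h : CDefined S D a b) : Cval S D a b ∈ CSet S D a b :=
  csInf_mem h

lemma cval_le {a b c : Ordinal} (h : c ∈ CSet S D a b) : Cval S D a b ≤ c :=
  csInf_le' h

lemma cmax_lt_S {a b : Ordinal} (h : CMaximal S D a b) : Cval S D a b < S :=
  (cval_mem S D h.1).1

lemma cmax_base_lt {a b : Ordinal} (h : CMaximal S D a b) : b < Cval S D a b :=
  (cval_mem S D h.1).2.1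

lemma cmax_deg {a b : Ordinal} (ha : a < S) (h : CMaximal S D a b) : D (Cval S D a b) a := by
  obtain ⟨a', ha1, ha2, ha3⟩ := (cval_mem S D h.1).2.2
  rcases eq_or_lt_of_le ha1 with rfl | hlt
  · exact ha3
  · exact absurd ha3 (h.2 a' hlt ha2)

/-- Nested collapse value, reading the list from the innermost entry outwards. -/
noncomputable def RList : List Ordinal → Ordinal → Ordinal
  | [], b => b
  | a :: l, b => RList l (Cval S D a b)

lemma rlist_cons (a : Ordinal) (l : List Ordinal) (b : Ordinal) :
    RList S D (a :: l) b = RList S D l (Cval S D a b) := rfl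

lemma clist_cons (a : Ordinal) (l : List Ordinal) (b : Ordinal) :
    CList S D (a :: l) b = Cval S D a (CList S D l b) := rfl

/-- Maximality at every level, reading the list from the innermost entry outwards. -/
def RMax : List Ordinal → Ordinal → Prop
  | [], _ => True
  | a :: l, b => CMaximal S D a b ∧ RMax l (Cval S D a b)

lemma clist_append : ∀ (l : List Ordinal) (x b : Ordinal),
    CList S D (l ++ [x]) b = CList S D l (Cval S D x b)
  | [], _, _ => rfl
  | a :: l, x, b => by
    show Cval S D a (CList S D (l ++ [x]) b) = Cval S D a (CList S D l (Cval S D x b))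
    rw [clist_append l x b]

lemma rlist_eq : ∀ (l : List Ordinal) (b : Ordinal), RList S D l b = CList S D l.reverse b
  | [], _ => rfl
  | a :: l, b => by
    rw [rlist_cons, rlist_eq l, List.reverse_cons, clist_append]

lemma standard_cons_cons (a a₂ : Ordinal) (l : List Ordinal) (b : Ordinal) :
    CListStandard S D (a :: a₂ :: l) b ↔
      CListStandard S D (a₂ :: l) b ∧ CMaximal S D a (CList S D (a₂ :: l) b) ∧
        CMinimal S D a (CList S D (a₂ :: l) b) := Iff.rfl

lemma standard_unsnoc : ∀ (l : List Ordinal) (x b : Ordinal),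
    CListStandard S D (l ++ [x]) b →
    CMaximal S D x b ∧ CListStandard S D l (Cval S D x b)
  | [], x, b, h => ⟨h, trivial⟩
  | [a], x, b, h => by
    obtain ⟨h1, h2, _⟩ := (standard_cons_cons S D a x [] b).1 h
    exact ⟨h1, h2⟩
  | a :: a₂ :: l, x, b, h => by
    obtain ⟨h1, h2, h3⟩ := (standard_cons_cons S D a a₂ (l ++ [x]) b).1 h
    obtain ⟨hx, hrest⟩ := standard_unsnoc (a₂ :: l) x b h1
    refine ⟨hx, ?_⟩
    have hcl : CList S D (a₂ :: (l ++ [x])) b = CList S D (a₂ :: l) (Cval S D x b) := by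
      rw [show (a₂ :: (l ++ [x])) = (a₂ :: l) ++ [x] by simp, clist_append]
    exact (standard_cons_cons S D a a₂ l (Cval S D x b)).2 ⟨hrest, hcl ▸ h2, hcl ▸ h3⟩

lemma standard_rmax : ∀ (r : List Ordinal) (b : Ordinal),
    CListStandard S D r.reverse b → RMax S D r b
  | [], _, _ => trivial
  | a :: r, b, h => by
    rw [List.reverse_cons] at h
    obtain ⟨h1, h2⟩ := standard_unsnoc S D r.reverse a b h
    exact ⟨h1, standard_rmax r _ h2⟩

lemma rlist_lt {y t : Ordinal} (hy : y < S) (ht : t < S) (hdt : D t y) :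
    ∀ (l : List Ordinal) (b : Ordinal), (∀ a ∈ l, a < y) → RMax S D l b → b < t →
      RList S D l b < t
  | [], _, _, _, hbt => hbt
  | a :: l, b, hl, hm, hbt => by
    have hay : a < y := hl a (List.mem_cons_self)
    have h1 : Cval S D a b ≤ t := cval_le S D ⟨ht, hbt, y, hay.le, hy, hdt⟩
    have h2 : Cval S D a b ≠ t := fun he => hm.1.2 y hay hy (he ▸ hdt)
    rw [rlist_cons]
    exact rlist_lt hy ht hdt l (Cval S D a b)
      (fun z hz => hl z (List.mem_cons_of_mem _ hz)) hm.2 (lt_of_le_of_ne h1 h2)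

lemma rlist_base_le : ∀ (l : List Ordinal) (b : Ordinal), RMax S D l b → b ≤ RList S D l b
  | [], _, _ => le_rfl
  | a :: l, b, hm => by
    rw [rlist_cons]
    exact (cmax_base_lt S D hm.1).le.trans (rlist_base_le l _ hm.2)

lemma rlist_base_lt (a : Ordinal) (l : List Ordinal) (b : Ordinal)
    (hm : RMax S D (a :: l) b) : b < RList S D (a :: l) b := by
  rw [rlist_cons]
  exact (cmax_base_lt S D hm.1).trans_le (rlist_base_le S D l _ hm.2)

lemma standard_head_max (a : Ordinal) (l : List Ordinal) (b : Ordinal)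
    (h : CListStandard S D (a :: l) b) : CMaximal S D a (CList S D l b) := by
  cases l with
  | nil => exact h
  | cons a₂ l => exact ((standard_cons_cons S D a a₂ l b).1 h).2.1

lemma standard_sorted : ∀ (l : List Ordinal) (b : Ordinal), (∀ x ∈ l, x < S) →
    CListStandard S D l b → l.Pairwise (· ≤ ·)
  | [], _, _, _ => List.Pairwise.nil
  | [a], _, _, _ => List.pairwise_singleton _ a
  | a :: a₂ :: l, b, hS, h => by
    obtain ⟨h1, h2, h3⟩ := (standard_cons_cons S D a a₂ l b).1 h
    rw [clist_cons] at h2 h3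
    have IH : (a₂ :: l).Pairwise (· ≤ ·) :=
      standard_sorted (a₂ :: l) b (fun x hx => hS x (List.mem_cons_of_mem _ hx)) h1
    have hmax2 : CMaximal S D a₂ (CList S D l b) := standard_head_max S D a₂ l b h1
    have key : a ≤ a₂ := by
      by_contra hcon
      push_neg at hcon
      have haS' : a < S := hS a (List.mem_cons_self)
      have hDe : D (Cval S D a (Cval S D a₂ (CList S D l b))) a := cmax_deg S D haS' h2
      have hef : Cval S D a₂ (CList S D l b) < Cval S D a (Cval S D a₂ (CList S D l b)) :=
        cmax_base_lt S D h2
      have hgf : CList S D l b < Cval S D a₂ (CList S D l b) := cmax_base_lt S D hmax2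
      have hemem : Cval S D a (Cval S D a₂ (CList S D l b)) ∈ CSet S D a (CList S D l b) :=
        ⟨cmax_lt_S S D h2, hgf.trans hef, a, le_rfl, haS', hDe⟩
      have hle : Cval S D a (CList S D l b) ≤ Cval S D a (Cval S D a₂ (CList S D l b)) :=
        cval_le S D hemem
      have heq : Cval S D a (CList S D l b) = Cval S D a (Cval S D a₂ (CList S D l b)) := by
        rcases eq_or_lt_of_le hle with h' | hclt
        · exact h'
        · exfalso
          obtain ⟨hcS', hgc, a'', ha''1, ha''2, ha''3⟩ := cval_mem S D (⟨_, hemem⟩ :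
            CDefined S D a (CList S D l b))
          have hfc : Cval S D a₂ (CList S D l b) ≤ Cval S D a (CList S D l b) :=
            cval_le S D ⟨hcS', hgc, a'', hcon.le.trans ha''1, ha''2, ha''3⟩
          have hfc' : Cval S D a₂ (CList S D l b) < Cval S D a (CList S D l b) := by
            rcases eq_or_lt_of_le hfc with he | he
            · exact absurd (he ▸ ha''3)
                (hmax2.2 a'' (lt_of_lt_of_le hcon ha''1) ha''2)
            · exact he
          exact absurd (cval_le S D (⟨hcS', hfc', a'', ha''1, ha''2, ha''3⟩ :
            Cval S D a (CList S D l b) ∈ CSet S D a (Cval S D a₂ (CList S D l b)))) (not_le.2 hclt)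
      have hmin := h3.2 (CList S D l b) hgf
      rw [heq] at hmin
      exact lt_irrefl _ hmin
    refine List.pairwise_cons.2 ⟨?_, IH⟩
    intro x hx
    rcases List.mem_cons.1 hx with rfl | hx'
    · exact key
    · exact key.trans ((List.pairwise_cons.1 IH).1 x hx')

lemma aux_main : ∀ (ra rc : List Ordinal) (b : Ordinal),
    (∀ x ∈ ra, x < S) → (∀ x ∈ rc, x < S) →
    ra.Pairwise (· ≥ ·) → rc.Pairwise (· ≥ ·) → RMax S D ra b → RMax S D rc b →
    (RList S D ra b < RList S D rc b ↔ List.Lex (· < ·) ra rc)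
  | [], [], b, _, _, _, _, _, _ =>
    iff_of_false (lt_irrefl b) List.not_lex_nil
  | [], y :: rc, b, _, _, _, _, _, hmc =>
    iff_of_true (rlist_base_lt S D y rc b hmc) List.Lex.nil
  | x :: ra, [], b, _, _, _, _, hma, _ =>
    iff_of_false (not_lt.2 (rlist_base_lt S D x ra b hma).le) List.not_lex_nil
  | x :: ra, y :: rc, b, hraS, hrcS, hsra, hsrc, hma, hmc => by
    rcases lt_trichotomy x y with hxy | rfl | hyx
    · refine iff_of_true ?_ (List.Lex.rel hxy)
      have hyS : y < S := hrcS y (List.mem_cons_self)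
      have h1 : RList S D (x :: ra) b < Cval S D y b :=
        rlist_lt S D hyS (cmax_lt_S S D hmc.1) (cmax_deg S D hyS hmc.1) (x :: ra) b
          (by
            intro z hz
            rcases List.mem_cons.1 hz with rfl | hz'
            · exact hxy
            · exact lt_of_le_of_lt ((List.pairwise_cons.1 hsra).1 z hz') hxy)
          hma (cmax_base_lt S D hmc.1)
      rw [rlist_cons S D y rc b]
      exact h1.trans_le (rlist_base_le S D rc _ hmc.2)
    · rw [rlist_cons S D x ra b, rlist_cons S D x rc b, List.lex_cons_iff]
      exact aux_main ra rc (Cval S D x b)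
        (fun z hz => hraS z (List.mem_cons_of_mem _ hz))
        (fun z hz => hrcS z (List.mem_cons_of_mem _ hz))
        ((List.pairwise_cons.1 hsra).2) ((List.pairwise_cons.1 hsrc).2) hma.2 hmc.2
    · have hxS : x < S := hraS x (List.mem_cons_self)
      have h1 : RList S D (y :: rc) b < Cval S D x b :=
        rlist_lt S D hxS (cmax_lt_S S D hma.1) (cmax_deg S D hxS hma.1) (y :: rc) b
          (by
            intro z hz
            rcases List.mem_cons.1 hz with rfl | hz'
            · exact hyx
            · exact lt_of_le_of_lt ((List.pairwise_cons.1 hsrc).1 z hz') hyx)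
          hmc (cmax_base_lt S D hma.1)
      have h2 : RList S D (y :: rc) b < RList S D (x :: ra) b := by
        rw [rlist_cons S D x ra b]
        exact h1.trans_le (rlist_base_le S D ra _ hma.2)
      refine iff_of_false (asymm h2) ?_
      intro hlex
      cases hlex with
      | rel h => exact absurd h (asymm hyx)
      | cons h => exact lt_irrefl _ hyx

end AuxLemmas

theorem standard_rep_sorted_and_lex_comparison (S : Ordinal) (D : Ordinal → Ordinal → Prop)
    (hD : IsDegree S D) (b : Ordinal) (hb : b < S)
    (la lc : List Ordinal) (hla : la ≠ []) (hlc : lc ≠ [])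
    (haS : ∀ x ∈ la, x < S) (hcS : ∀ x ∈ lc, x < S)
    (hsa : CListStandard S D la b) (hsc : CListStandard S D lc b) :
    la.Pairwise (· ≤ ·) ∧
      (CList S D la b < CList S D lc b ↔ List.Lex (· < ·) la.reverse lc.reverse) := by
  have hsort : la.Pairwise (· ≤ ·) := standard_sorted S D la b haS hsa
  have hcsort : lc.Pairwise (· ≤ ·) := standard_sorted S D lc b hcS hsc
  refine ⟨hsort, ?_⟩
  have h1 : CList S D la b = RList S D la.reverse b := by
    rw [rlist_eq, List.reverse_reverse]
  have h2 : CList S D lc b = RList S D lc.reverse b := by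
    rw [rlist_eq, List.reverse_reverse]
  rw [h1, h2]
  refine aux_main S D la.reverse lc.reverse b (fun x hx => haS x (List.mem_reverse.1 hx))
    (fun x hx => hcS x (List.mem_reverse.1 hx)) ?_ ?_
    (standard_rmax S D la.reverse b (by rwa [List.reverse_reverse]))
    (standard_rmax S D lc.reverse b (by rwa [List.reverse_reverse]))
  · rw [List.pairwise_reverse]
    exact hsort
  · rw [List.pairwise_reverse]
    exact hcsort
end

section
/- Let D be a degree on the ordinal S, and let R be the least set of ordinals less than S containing 0 and closed under the collapsing function, i.e., whenever a, b ∈ R and C(a,b) is defined, C(a,b) ∈ R. Then the order type of R (under the usual ordering of ordinals) is at most ε_0, the least ordinal x with ω^x = x. -/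
open Ordinal Set

universe u

/-- The least set of ordinals containing `0` and closed under the collapsing function. -/
inductive RSet (S : Ordinal) (D : Ordinal → Ordinal → Prop) : Ordinal → Prop
  | zero : RSet S D 0
  | collapse (a b : Ordinal) : RSet S D a → RSet S D b → CDefined S D a b →
      RSet S D (Cval S D a b)

noncomputable section

/-- The order type of a set of ordinals, under the usual ordering. -/
def orderTypeOf (s : Set Ordinal.{u}) : Ordinal.{u + 1} :=
  Ordinal.type (Subrel ((· < ·) : Ordinal.{u} → Ordinal.{u} → Prop) (· ∈ s))

/-- `ε₀`, the least ordinal `x` with `ω ^ x = x`. -/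
def eps0 : Ordinal.{u} :=
  sInf {x : Ordinal | omega0 ^ x = x}

end

namespace CollapseAux

noncomputable section

theorem orderTypeOf_mono {X Y : Set Ordinal.{u}} (h : X ⊆ Y) :
    orderTypeOf X ≤ orderTypeOf Y := by
  rw [orderTypeOf, orderTypeOf, type_le_iff']
  exact ⟨⟨⟨Set.inclusion h, Set.inclusion_injective h⟩, Iff.rfl⟩⟩

theorem orderTypeOf_empty : orderTypeOf (∅ : Set Ordinal.{u}) = 0 := by
  rw [orderTypeOf, type_eq_zero_iff_isEmpty]
  exact ⟨fun x => x.2⟩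

theorem orderTypeOf_singleton (a : Ordinal.{u}) :
    orderTypeOf ({a} : Set Ordinal.{u}) = 1 := by
  rw [orderTypeOf]
  have h1 : Nonempty ({a} : Set Ordinal.{u}) := ⟨⟨a, rfl⟩⟩
  have h2 : Subsingleton ({a} : Set Ordinal.{u}) := ⟨fun x y => Subtype.ext (x.2.trans y.2.symm)⟩
  exact type_eq_one_of_unique _

theorem orderTypeOf_union {X Y : Set Ordinal.{u}} (h : ∀ y ∈ X, ∀ z ∈ Y, y < z) :
    orderTypeOf (X ∪ Y) = orderTypeOf X + orderTypeOf Y := by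
  classical
  rw [orderTypeOf, orderTypeOf, orderTypeOf, ← type_sum_lex]
  let toF : X ⊕ Y → (X ∪ Y : Set Ordinal.{u}) :=
    Sum.elim (fun x => ⟨x.1, Or.inl x.2⟩) (fun y => ⟨y.1, Or.inr y.2⟩)
  let invF : (X ∪ Y : Set Ordinal.{u}) → X ⊕ Y := fun z =>
    if hz : z.1 ∈ X then Sum.inl ⟨z.1, hz⟩ else Sum.inr ⟨z.1, z.2.resolve_left hz⟩
  have key : ∀ x ∈ X, x ∈ Y → False := fun x hx hy => lt_irrefl x (h x hx x hy)
  refine (RelIso.ordinal_type_eq (⟨⟨toF, invF, ?_, ?_⟩, ?_⟩ :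
      Sum.Lex (Subrel _ (· ∈ X)) (Subrel _ (· ∈ Y)) ≃r Subrel _ (· ∈ X ∪ Y))).symm
  · rintro (x | y)
    · simp only [toF, invF, Sum.elim_inl]
      rw [dif_pos x.2]
    · simp only [toF, invF, Sum.elim_inr]
      rw [dif_neg (fun hz => key _ hz y.2)]
  · rintro ⟨z, hz⟩
    by_cases hzX : z ∈ X
    · simp only [toF, invF]
      rw [dif_pos hzX]
      rfl
    · simp only [toF, invF]
      rw [dif_neg hzX]
      rfl
  · rintro (x | y) (x' | y')
    · simp only [Equiv.coe_fn_mk, Sum.elim_inl, toF]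
      exact Iff.symm Sum.lex_inl_inl
    · simp only [Equiv.coe_fn_mk, Sum.elim_inl, Sum.elim_inr, toF]
      exact iff_of_true (h _ x.2 _ y'.2) (Sum.Lex.sep _ _)
    · simp only [Equiv.coe_fn_mk, Sum.elim_inl, Sum.elim_inr, toF]
      exact iff_of_false (asymm (h _ x'.2 _ y.2)) Sum.lex_inr_inl
    · simp only [Equiv.coe_fn_mk, Sum.elim_inr, toF]
      exact Iff.symm Sum.lex_inr_inr

theorem typein_subrel {X : Set Ordinal.{u}} {x : Ordinal.{u}} (hx : x ∈ X) :
    typein (Subrel ((· < ·) : Ordinal.{u} → Ordinal.{u} → Prop) (· ∈ X)) ⟨x, hx⟩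
      = orderTypeOf (X ∩ Iio x) := by
  rw [← type_subrel, orderTypeOf]
  exact RelIso.ordinal_type_eq
    ⟨⟨fun z => ⟨z.1.1, z.1.2, z.2⟩, fun z => ⟨⟨z.1, z.2.1⟩, z.2.2⟩,
      fun z => rfl, fun z => rfl⟩, Iff.rfl⟩

theorem orderTypeOf_le_iff {X : Set Ordinal.{u}} {β : Ordinal.{u+1}} :
    orderTypeOf X ≤ β ↔ ∀ x, x ∈ X → orderTypeOf (X ∩ Iio x) < β := by
  constructor
  · intro h x hx
    rw [← typein_subrel hx]
    exact (typein_lt_type _ _).trans_le h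
  · intro h
    by_contra hb
    push_neg at hb
    have hb' : β < (typein (Subrel ((· < ·) : Ordinal.{u} → Ordinal.{u} → Prop) (· ∈ X))).top := by
      rw [top_typein]; exact hb
    obtain ⟨z, hz⟩ :=
      (typein (Subrel ((· < ·) : Ordinal.{u} → Ordinal.{u} → Prop) (· ∈ X))).mem_range_iff_rel.2 hb'
    have h2 := h z.1 z.2
    rw [← typein_subrel z.2] at h2
    have hz' : typein (Subrel ((· < ·) : Ordinal.{u} → Ordinal.{u} → Prop) (· ∈ X)) ⟨z.1, z.2⟩ = β := hz
    rw [hz'] at h2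
    exact lt_irrefl β h2

theorem ot_split_Iio (R : Set Ordinal.{u}) {b r : Ordinal.{u}} (h : b < r) :
    orderTypeOf (R ∩ Iio r) = orderTypeOf (R ∩ Iic b) + orderTypeOf (R ∩ Ioo b r) := by
  rw [← orderTypeOf_union (fun y hy z hz => lt_of_le_of_lt hy.2 hz.2.1)]
  congr 1
  ext z
  constructor
  · rintro ⟨hz, hzr⟩
    rcases le_or_gt z b with h1 | h1
    · exact Or.inl ⟨hz, h1⟩
    · exact Or.inr ⟨hz, h1, hzr⟩
  · rintro (⟨hz, h1⟩ | ⟨hz, h1, h2⟩)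
    · exact ⟨hz, lt_of_le_of_lt h1 h⟩
    · exact ⟨hz, h2⟩

theorem ot_split_Iic (R : Set Ordinal.{u}) {b : Ordinal.{u}} (hb : b ∈ R) :
    orderTypeOf (R ∩ Iic b) = orderTypeOf (R ∩ Iio b) + 1 := by
  rw [← orderTypeOf_singleton b, ← orderTypeOf_union (fun y hy z hz => by
    rw [mem_singleton_iff] at hz
    exact hz ▸ hy.2)]
  congr 1
  ext z
  constructor
  · rintro ⟨hz, hzb⟩
    have hzb' : z ≤ b := hzb
    rcases lt_or_eq_of_le hzb' with h1 | h1
    · exact Or.inl ⟨hz, h1⟩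
    · exact Or.inr h1
  · rintro (⟨hz, h1⟩ | h1)
    · have h1' : z < b := h1
      exact ⟨hz, le_of_lt h1'⟩
    · rw [mem_singleton_iff] at h1
      exact ⟨h1 ▸ hb, le_of_eq h1⟩

theorem ot_split_Ioo (R : Set Ordinal.{u}) {b m x : Ordinal.{u}} (h1 : b ≤ m) (h2 : m < x) :
    orderTypeOf (R ∩ Ioo b x) = orderTypeOf (R ∩ Ioc b m) + orderTypeOf (R ∩ Ioo m x) := by
  rw [← orderTypeOf_union (fun y hy z hz => lt_of_le_of_lt hy.2.2 hz.2.1)]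
  congr 1
  ext z
  constructor
  · rintro ⟨hz, hz1, hz2⟩
    rcases le_or_gt z m with h3 | h3
    · exact Or.inl ⟨hz, hz1, h3⟩
    · exact Or.inr ⟨hz, h3, hz2⟩
  · rintro (⟨hz, h3, h4⟩ | ⟨hz, h3, h4⟩)
    · exact ⟨hz, h3, lt_of_le_of_lt h4 h2⟩
    · exact ⟨hz, lt_of_le_of_lt h1 h3, h4⟩

theorem ot_split_Ioc (R : Set Ordinal.{u}) {b m r : Ordinal.{u}} (h1 : b ≤ m) (h2 : m ≤ r) :
    orderTypeOf (R ∩ Ioc b r) = orderTypeOf (R ∩ Ioc b m) + orderTypeOf (R ∩ Ioc m r) := by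
  rw [← orderTypeOf_union (fun y hy z hz => lt_of_le_of_lt hy.2.2 hz.2.1)]
  congr 1
  ext z
  constructor
  · rintro ⟨hz, hz1, hz2⟩
    rcases le_or_gt z m with h3 | h3
    · exact Or.inl ⟨hz, hz1, h3⟩
    · exact Or.inr ⟨hz, h3, hz2⟩
  · rintro (⟨hz, h3, h4⟩ | ⟨hz, h3, h4⟩)
    · exact ⟨hz, h3, le_trans h4 h2⟩
    · exact ⟨hz, lt_of_le_of_lt h1 h3, h4⟩

theorem ot_Ioc_top (R : Set Ordinal.{u}) {m r : Ordinal.{u}} (hr : r ∈ R) (h : m < r) :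
    orderTypeOf (R ∩ Ioc m r) = orderTypeOf (R ∩ Ioo m r) + 1 := by
  rw [← orderTypeOf_singleton r, ← orderTypeOf_union (fun y hy z hz => by
    rw [mem_singleton_iff] at hz
    exact hz ▸ hy.2.2)]
  congr 1
  ext z
  constructor
  · rintro ⟨hz, hz1, hz2⟩
    have hz2' : z ≤ r := hz2
    rcases lt_or_eq_of_le hz2' with h1 | h1
    · exact Or.inl ⟨hz, hz1, h1⟩
    · exact Or.inr h1
  · rintro (⟨hz, h3, h4⟩ | h1)
    · have h4' : z < r := h4
      exact ⟨hz, h3, le_of_lt h4'⟩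
    · rw [mem_singleton_iff] at h1
      exact ⟨h1 ▸ hr, h1 ▸ h, le_of_eq h1⟩

theorem ot_Ioc_self (R : Set Ordinal.{u}) (b : Ordinal.{u}) :
    orderTypeOf (R ∩ Ioc b b) = 0 := by
  rw [Set.Ioc_self, Set.inter_empty, orderTypeOf_empty]


/-! ### Degree classes -/

def Deg (S : Ordinal.{u}) (D : Ordinal.{u} → Ordinal.{u} → Prop) (a : Ordinal.{u}) :
    Set Ordinal.{u} := {c | c < S ∧ D c a}

theorem limPts_mono {X Y : Set Ordinal.{u}} (h : X ⊆ Y) : limPts X ⊆ limPts Y :=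
  fun c hc => ⟨hc.1, fun b hb => by
    obtain ⟨x, hx, h1, h2⟩ := hc.2 b hb
    exact ⟨x, h hx, h1, h2⟩⟩

theorem limPts_idem {X : Set Ordinal.{u}} : limPts (limPts X) ⊆ limPts X := by
  rintro c ⟨hc, hu⟩
  refine ⟨hc, fun b hb => ?_⟩
  obtain ⟨x, hxL, hbx, hxc⟩ := hu b hb
  obtain ⟨x', hx', hbx', hx'x⟩ := hxL.2 b hbx
  exact ⟨x', hx', hbx', hx'x.trans hxc⟩

theorem limPts_union {X Y : Set Ordinal.{u}} : limPts (X ∪ Y) ⊆ limPts X ∪ limPts Y := by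
  rintro c ⟨hc, hu⟩
  by_contra hcon
  rw [Set.mem_union] at hcon
  push_neg at hcon
  obtain ⟨h1, h2⟩ := hcon
  have e1 : ∃ b < c, ∀ x ∈ X, b < x → ¬ x < c := by
    by_contra h'
    push_neg at h'
    exact h1 ⟨hc, fun b hb => by
      obtain ⟨x, hx, h1', h2'⟩ := h' b hb
      exact ⟨x, hx, h1', h2'⟩⟩
  have e2 : ∃ b < c, ∀ x ∈ Y, b < x → ¬ x < c := by
    by_contra h'
    push_neg at h'
    exact h2 ⟨hc, fun b hb => by
      obtain ⟨x, hx, h1', h2'⟩ := h' b hb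
      exact ⟨x, hx, h1', h2'⟩⟩
  obtain ⟨b1, hb1, H1⟩ := e1
  obtain ⟨b2, hb2, H2⟩ := e2
  obtain ⟨x, hx, hlt, hltc⟩ := hu (max b1 b2) (max_lt hb1 hb2)
  rcases hx with hx | hx
  · exact H1 x hx (lt_of_le_of_lt (le_max_left b1 b2) hlt) hltc
  · exact H2 x hx (lt_of_le_of_lt (le_max_right b1 b2) hlt) hltc

variable {S : Ordinal.{u}} {D : Ordinal.{u} → Ordinal.{u} → Prop}

theorem Deg_closed_antitone (hD : IsDegree S D) :
    ∀ a : Ordinal.{u}, a < S → (∀ c ∈ limPts (Deg S D a), c < S → c ∈ Deg S D a)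
      ∧ (∀ b ≤ a, Deg S D a ⊆ Deg S D b) := by
  intro a
  induction a using Ordinal.induction with
  | h a IH =>
  intro haS
  rcases Ordinal.zero_or_succ_or_isSuccLimit a with rfl | ⟨x, rfl⟩ | hlim
  · constructor
    · intro c _ hcS
      exact ⟨hcS, hD.deg_zero c hcS⟩
    · intro b hb
      rw [nonpos_iff_eq_zero.1 hb]
  · have hx1S : x + 1 < S := by rwa [Ordinal.add_one_eq_succ]
    have hxS : x < S := (Order.lt_succ x).trans haS
    have IHx := IH x (Order.lt_succ x) hxS
    have hset : Deg S D (Order.succ x) = {c | c < S ∧ D c (x + 1)} := by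
      rw [Ordinal.add_one_eq_succ]
      rfl
    have hs := hD.succ x hx1S
    have hsub : Deg S D (Order.succ x) ⊆ Deg S D x := by
      rcases hs with h | ⟨d, hdx, hdS, hdlim, h⟩
      · intro c hc
        rw [hset, h] at hc
        exact IHx.1 c hc.1 hc.2
      · intro c hc
        rw [hset, h] at hc
        rcases hc.1 with hL | hE
        · exact IHx.1 c hL hc.2
        · exact hE.1
    constructor
    · intro c hc hcS
      rcases hs with h | ⟨d, hdx, hdS, hdlim, h⟩
      · rw [hset, h]
        rw [hset, h] at hc
        exact ⟨limPts_idem (limPts_mono (fun z hz => hz.1) hc), hcS⟩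
      · rw [hset, h]
        rw [hset, h] at hc
        refine ⟨Or.inl ?_, hcS⟩
        have hc' : c ∈ limPts (limPts (Deg S D x) ∪ Deg S D x) :=
          limPts_mono (fun z hz => by
            rcases hz.1 with h1 | h1
            · exact Or.inl h1
            · exact Or.inr h1.1) hc
        rcases limPts_union hc' with h1 | h1
        · exact limPts_idem h1
        · exact h1
    · intro b hb
      rcases lt_or_eq_of_le hb with hlt | rfl
      · have hbx : b ≤ x := Order.lt_succ_iff.1 hlt
        exact fun c hc => IHx.2 b hbx (hsub hc)
      · exact fun _ h => h
  · have hch : ∀ c, c ∈ Deg S D a ↔ c < S ∧ ∀ b < a, D c b := by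
      intro c
      constructor
      · rintro ⟨hcS, hc⟩
        exact ⟨hcS, (hD.limit a haS hlim c hcS).1 hc⟩
      · rintro ⟨hcS, hc⟩
        exact ⟨hcS, (hD.limit a haS hlim c hcS).2 hc⟩
    have hanti : ∀ b ≤ a, Deg S D a ⊆ Deg S D b := by
      intro b hb c hc
      rcases lt_or_eq_of_le hb with hlt | rfl
      · exact ⟨hc.1, ((hch c).1 hc).2 b hlt⟩
      · exact hc
    refine ⟨?_, hanti⟩
    intro c hc hcS
    rw [hch c]
    refine ⟨hcS, fun b hb => ?_⟩
    exact ((IH b hb (hb.trans haS)).1 c (limPts_mono (hanti b hb.le) hc) hcS).2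

theorem Deg_anti (hD : IsDegree S D) {a a' : Ordinal.{u}} (h : a ≤ a') (h' : a' < S) :
    Deg S D a' ⊆ Deg S D a :=
  (Deg_closed_antitone hD a' h').2 a h

theorem Cval_spec (hD : IsDegree S D) {a b : Ordinal.{u}} (h : CDefined S D a b) :
    Cval S D a b < S ∧ b < Cval S D a b ∧ a < S ∧ Cval S D a b ∈ Deg S D a ∧
      ∀ x, x ∈ Deg S D a → b < x → x < Cval S D a b → False := by
  have hm : Cval S D a b ∈ CSet S D a b := csInf_mem h
  obtain ⟨hcS, hbc, a', haa', ha'S, hd⟩ := hm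
  have haS : a < S := lt_of_le_of_lt haa' ha'S
  refine ⟨hcS, hbc, haS, Deg_anti hD haa' ha'S ⟨hcS, hd⟩, ?_⟩
  intro x hx hbx hxc
  have hxm : x ∈ CSet S D a b := ⟨hx.1, hbx, a, le_rfl, haS, hx.2⟩
  exact absurd (csInf_le' hxm : Cval S D a b ≤ x) (not_le.2 hxc)

/-! ### The generated set and its order type -/

def RR (S : Ordinal.{u}) (D : Ordinal.{u} → Ordinal.{u} → Prop) : Set Ordinal.{u} :=
  {x | RSet S D x}

def fR (S : Ordinal.{u}) (D : Ordinal.{u} → Ordinal.{u} → Prop) (a : Ordinal.{u}) :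
    Ordinal.{u+1} :=
  orderTypeOf (RR S D ∩ Iio a)

theorem fR_lt_fR {a₁ a : Ordinal.{u}} (hR : RSet S D a₁) (h : a₁ < a) :
    fR S D a₁ < fR S D a := by
  have h2 := orderTypeOf_le_iff.1 (le_refl (orderTypeOf (RR S D ∩ Iio a))) a₁ ⟨hR, h⟩
  have heq : (RR S D ∩ Iio a) ∩ Iio a₁ = RR S D ∩ Iio a₁ := by
    ext z
    constructor
    · rintro ⟨⟨hz, _⟩, hz2⟩
      exact ⟨hz, hz2⟩
    · rintro ⟨hz, hz2⟩
      exact ⟨⟨hz, lt_trans hz2 h⟩, hz2⟩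
  rw [heq] at h2
  exact h2

theorem main_bound (hD : IsDegree S D) : ∀ r' : Ordinal.{u},
    (∀ a b : Ordinal.{u}, a < S → b < r' → r' ≤ S →
      (∀ x, x ∈ Deg S D a → x ∈ Ioo b r' → False) →
      orderTypeOf (RR S D ∩ Ioo b r') ≤ omega0 ^ fR S D a)
    ∧ (∀ a b : Ordinal.{u}, a < S → b < r' → r' < S → RSet S D r' → r' ∉ Deg S D a →
        (∀ x, x ∈ Deg S D a → x ∈ Ioo b r' → False) →
      orderTypeOf (RR S D ∩ Ioc b r') < omega0 ^ fR S D a) := by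
  intro r'
  induction r' using Ordinal.induction with
  | h r' IH =>
  have hM1 : ∀ a b : Ordinal.{u}, a < S → b < r' → r' ≤ S →
      (∀ x, x ∈ Deg S D a → x ∈ Ioo b r' → False) →
      orderTypeOf (RR S D ∩ Ioo b r') ≤ omega0 ^ fR S D a := by
    intro a b haS hbr hr'S hgap
    rw [orderTypeOf_le_iff]
    intro x hx
    obtain ⟨hxR, hbx, hxr'⟩ := hx
    have hEQ : (RR S D ∩ Ioo b r') ∩ Iio x = RR S D ∩ Ioo b x := by
      ext z
      constructor
      · rintro ⟨⟨hz, hz1, _⟩, hz2⟩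
        exact ⟨hz, hz1, hz2⟩
      · rintro ⟨hz, hz1, hz2⟩
        exact ⟨⟨hz, hz1, hz2.trans hxr'⟩, hz2⟩
    rw [hEQ]
    cases hxR with
    | zero => exact absurd hbx not_lt_zero
    | collapse a₁ b₁ ha₁R hb₁R hCD =>
      obtain ⟨hcS, hb₁c, ha₁S, hcdeg, hcmin⟩ := Cval_spec hD hCD
      have ha₁a : a₁ < a := by
        by_contra hcon
        push_neg at hcon
        exact hgap _ (Deg_anti hD hcon ha₁S hcdeg) ⟨hbx, hxr'⟩
      have hmx : max b b₁ < Cval S D a₁ b₁ := max_lt hbx hb₁c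
      rw [ot_split_Ioo (RR S D) (le_max_left b b₁) hmx]
      have hterm2 : orderTypeOf (RR S D ∩ Ioo (max b b₁) (Cval S D a₁ b₁))
          ≤ omega0 ^ fR S D a₁ :=
        (IH _ hxr').1 a₁ (max b b₁) ha₁S hmx (le_of_lt (lt_of_lt_of_le hxr' hr'S))
          (fun z hz hz2 =>
            hcmin z hz (lt_of_le_of_lt (le_max_right b b₁) hz2.1) hz2.2)
      have hterm2' : orderTypeOf (RR S D ∩ Ioo (max b b₁) (Cval S D a₁ b₁))
          < omega0 ^ fR S D a :=
        lt_of_le_of_lt hterm2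
          ((opow_lt_opow_iff_right one_lt_omega0).2 (fR_lt_fR ha₁R ha₁a))
      have hterm1 : orderTypeOf (RR S D ∩ Ioc b (max b b₁)) < omega0 ^ fR S D a := by
        rcases le_or_gt b₁ b with h1 | h1
        · rw [max_eq_left h1, ot_Ioc_self]
          exact opow_pos _ omega0_pos
        · rw [max_eq_right h1.le]
          exact (IH b₁ (lt_trans hb₁c hxr')).2 a b haS h1 (lt_trans hb₁c hcS) hb₁R
            (fun hdeg => hgap b₁ hdeg ⟨h1, lt_trans hb₁c hxr'⟩)
            (fun z hz hz2 => hgap z hz ⟨hz2.1, lt_trans hz2.2 (lt_trans hb₁c hxr')⟩)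
      exact principal_add_omega0_opow (fR S D a) hterm1 hterm2'
  refine ⟨hM1, ?_⟩
  intro a b haS hbr hr'S hRr' hnd hgap
  cases hRr' with
  | zero => exact absurd hbr not_lt_zero
  | collapse a₂ b₂ ha₂R hb₂R hCD =>
    obtain ⟨hcS, hb₂c, ha₂S, hcdeg, hcmin⟩ := Cval_spec hD hCD
    have ha₂a : a₂ < a := by
      by_contra hcon
      push_neg at hcon
      exact hnd (Deg_anti hD hcon ha₂S hcdeg)
    have hm : max b b₂ < Cval S D a₂ b₂ := max_lt hbr hb₂c
    rw [ot_split_Ioc (RR S D) (le_max_left b b₂) hm.le,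
      ot_Ioc_top (RR S D) (RSet.collapse a₂ b₂ ha₂R hb₂R hCD) hm]
    have hfa : fR S D a₂ < fR S D a := fR_lt_fR ha₂R ha₂a
    have h1ltfa : (1 : Ordinal.{u+1}) < omega0 ^ fR S D a := by
      refine lt_of_lt_of_le one_lt_omega0 ?_
      calc (omega0 : Ordinal.{u+1}) = omega0 ^ (1 : Ordinal.{u+1}) := (opow_one _).symm
        _ ≤ omega0 ^ fR S D a := opow_le_opow_right omega0_pos
            (Order.one_le_iff_pos.2 (zero_le.trans_lt hfa))
    have ht2 : orderTypeOf (RR S D ∩ Ioo (max b b₂) (Cval S D a₂ b₂))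
        ≤ omega0 ^ fR S D a₂ :=
      hM1 a₂ (max b b₂) ha₂S hm hr'S.le
        (fun z hz hz2 => hcmin z hz (lt_of_le_of_lt (le_max_right b b₂) hz2.1) hz2.2)
    have ht2' : orderTypeOf (RR S D ∩ Ioo (max b b₂) (Cval S D a₂ b₂)) + 1
        < omega0 ^ fR S D a := by
      apply principal_add_omega0_opow
      · exact lt_of_le_of_lt ht2 ((opow_lt_opow_iff_right one_lt_omega0).2 hfa)
      · exact h1ltfa
    have ht1 : orderTypeOf (RR S D ∩ Ioc b (max b b₂)) < omega0 ^ fR S D a := by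
      rcases le_or_gt b₂ b with h1 | h1
      · rw [max_eq_left h1, ot_Ioc_self]
        exact opow_pos _ omega0_pos
      · rw [max_eq_right h1.le]
        exact (IH b₂ hb₂c).2 a b haS h1 (lt_trans hb₂c hcS) hb₂R
          (fun hdeg => hgap b₂ hdeg ⟨h1, hb₂c⟩)
          (fun z hz hz2 => hgap z hz ⟨hz2.1, lt_trans hz2.2 hb₂c⟩)
    exact principal_add_omega0_opow (fR S D a) ht1 ht2'

theorem fR_lt_eps (hD : IsDegree S D) {E : Ordinal.{u+1}} (hE : omega0 ^ E = E) :
    ∀ r : Ordinal.{u}, RSet S D r → fR S D r < E := by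
  have hE1 : (1 : Ordinal.{u+1}) ≤ E := by
    rw [← hE]
    exact Order.one_le_iff_pos.2 (opow_pos _ omega0_pos)
  have hEw : (omega0 : Ordinal.{u+1}) ≤ E := by
    rw [← hE]
    calc (omega0 : Ordinal.{u+1}) = omega0 ^ (1 : Ordinal.{u+1}) := (opow_one _).symm
      _ ≤ omega0 ^ E := opow_le_opow_right omega0_pos hE1
  have h1E : (1 : Ordinal.{u+1}) < E := lt_of_lt_of_le one_lt_omega0 hEw
  have hprin : ∀ x y : Ordinal.{u+1}, x < E → y < E → x + y < E := by
    intro x y hx hy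
    rw [← hE] at hx hy ⊢
    exact principal_add_omega0_opow E hx hy
  intro r hr
  induction hr with
  | zero =>
    have h0 : RR S D ∩ Iio 0 = ∅ := by
      ext z
      simp [not_lt_zero]
    rw [fR, h0, orderTypeOf_empty]
    exact lt_of_lt_of_le zero_lt_one hE1
  | collapse a b haR hbR hCD iha ihb =>
    obtain ⟨hcS, hbc, haS, hcdeg, hcmin⟩ := Cval_spec hD hCD
    have h2 : orderTypeOf (RR S D ∩ Ioo b (Cval S D a b)) ≤ omega0 ^ fR S D a :=
      (main_bound hD (Cval S D a b)).1 a b haS hbc hcS.le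
        (fun z hz hz2 => hcmin z hz hz2.1 hz2.2)
    have hle : fR S D (Cval S D a b) ≤ (fR S D b + 1) + omega0 ^ fR S D a := by
      rw [fR, ot_split_Iio (RR S D) hbc, ot_split_Iic (RR S D) hbR]
      exact add_le_add_right h2 _
    refine lt_of_le_of_lt hle ?_
    refine hprin _ _ (hprin _ _ ihb h1E) ?_
    rw [← hE]
    exact (opow_lt_opow_iff_right one_lt_omega0).2 iha

theorem lift_omega0_opow : ∀ x : Ordinal.{u},
    Ordinal.lift.{u+1} (omega0 ^ x) = omega0 ^ (Ordinal.lift.{u+1} x) := by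
  intro x
  induction x using Ordinal.induction with
  | h x IH =>
  rcases Ordinal.zero_or_succ_or_isSuccLimit x with rfl | ⟨y, rfl⟩ | hl
  · simp
  · rw [← Ordinal.add_one_eq_succ, opow_add, opow_one, Ordinal.lift_mul,
      IH y (by rw [← Ordinal.add_one_eq_succ]; exact lt_add_one y), Ordinal.lift_add,
      Ordinal.lift_one, opow_add, opow_one, Ordinal.lift_omega0]
  · apply le_antisymm
    · apply le_of_forall_lt
      intro c hc
      obtain ⟨c', hc', rfl⟩ := Ordinal.lt_lift_iff.1 hc
      obtain ⟨y, hy, hcy⟩ := (lt_opow_of_isSuccLimit omega0_ne_zero hl).1 hc'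
      have h1 : Ordinal.lift.{u+1} c' < Ordinal.lift.{u+1} (omega0 ^ y) :=
        Ordinal.lift_lt.2 hcy
      rw [IH y hy] at h1
      exact lt_of_lt_of_le h1
        (opow_le_opow_right omega0_pos (le_of_lt (Ordinal.lift_lt.2 hy)))
    · rw [opow_le_of_isSuccLimit omega0_ne_zero ((Ordinal.isSuccLimit_lift (o := x)).2 hl)]
      intro c hc
      obtain ⟨c', hc', rfl⟩ := Ordinal.lt_lift_iff.1 hc
      rw [← IH c' hc']
      exact Ordinal.lift_le.2 (opow_le_opow_right omega0_pos hc'.le)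

end

end CollapseAux

theorem orderType_RSet_le_eps0 (S : Ordinal.{u}) (D : Ordinal.{u} → Ordinal.{u} → Prop)
    (hD : IsDegree S D) :
    orderTypeOf {x | RSet S D x} ≤ Ordinal.lift.{u + 1} eps0.{u} := by
  have heps : omega0.{u} ^ eps0.{u} = eps0.{u} := by
    have hne : {x : Ordinal.{u} | omega0 ^ x = x}.Nonempty :=
      ⟨Ordinal.nfp (fun y => omega0 ^ y) 0,
        Ordinal.nfp_fp (Ordinal.isNormal_opow one_lt_omega0) 0⟩
    exact csInf_mem hne
  have hlift : omega0.{u+1} ^ (Ordinal.lift.{u+1} eps0.{u}) = Ordinal.lift.{u+1} eps0.{u} := by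
    rw [← CollapseAux.lift_omega0_opow, heps]
  rw [CollapseAux.orderTypeOf_le_iff]
  intro x hx
  exact CollapseAux.fR_lt_eps hD hlift x hx
end

section
/- Fix a positive integer n. For every standard term a of the n-th ordinal notation system and every nonempty suffix v of the prefix form of a, the string obtained by prepending to v the unique number of 'C' symbols that makes it the prefix form of a well-formed term is the prefix form of a standard term. -/
/-- Terms of the `n`-th ordinal notation system, generated from the constants `0` and
`Ω_n` and a binary function symbol `C`. -/
inductive NTerm where
  | zero : NTerm
  | Om : NTerm
  | C (a b : NTerm) : NTerm

/-- Symbols of the alphabet `{C, 0, Ω_n}`. -/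
inductive NSym where
  | C : NSym
  | zero : NSym
  | Om : NSym

/-- The symbol order `'C' < '0' < 'Ω_n'`. -/
def symLt : NSym → NSym → Prop
  | .C, .zero => True
  | .C, .Om => True
  | .zero, .Om => True
  | _, _ => False

/-- The postfix (reverse Polish) string of a term, the base argument written first
(so `C(C(0,0),0)` is written `000CC`). -/
def postfixStr : NTerm → List NSym
  | .zero => [NSym.zero]
  | .Om => [NSym.Om]
  | .C a b => postfixStr b ++ postfixStr a ++ [NSym.C]

/-- The prefix (Polish) string of a term. -/
def prefixStr : NTerm → List NSym
  | .zero => [NSym.zero]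
  | .Om => [NSym.Om]
  | .C a b => NSym.C :: (prefixStr a ++ prefixStr b)

/-- Comparison of terms: lexicographic comparison of their postfix strings with
`'C' < '0' < 'Ω_n'` (a proper prefix counting as smaller). -/
def tlt (a b : NTerm) : Prop :=
  List.Lex symLt (postfixStr a) (postfixStr b)

/-- `x` is a proper subterm (occurrence) of `y`. -/
inductive PSub : NTerm → NTerm → Prop
  | left (a b : NTerm) : PSub a (NTerm.C a b)
  | right (a b : NTerm) : PSub b (NTerm.C a b)
  | transLeft (x a b : NTerm) : PSub x a → PSub x (NTerm.C a b)
  | transRight (x a b : NTerm) : PSub x b → PSub x (NTerm.C a b)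

/-- `nlt k a b` : `a` is `k`-built from below from `< b`.  `a <_0 b` iff `a < b`, and
`a <_{k+1} b` iff every subterm occurrence `x ∈ T_a` with `x > a` has a proper subterm
`y ⊏ x` with `y <_k b`. -/
def nlt : ℕ → NTerm → NTerm → Prop
  | 0, a, b => tlt a b
  | k + 1, a, b => ∀ x : NTerm, (x = a ∨ PSub x a) → tlt a x →
      ∃ y : NTerm, PSub y x ∧ nlt k y b

/-- Standardness for the `n`-th system: `0` and `Ω_n` are standard, and `C(a,b)` is
standard iff `a` and `b` are standard, `b` is `0` or `Ω_n` or of the form `C(c,d)` with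
`a ≤ c`, and `a` is `n`-built from below from `< C(a,b)`. -/
def Std (n : ℕ) : NTerm → Prop
  | .zero => True
  | .Om => True
  | .C a b => Std n a ∧ Std n b ∧
      (b = NTerm.zero ∨ b = NTerm.Om ∨
        ∃ c d : NTerm, b = NTerm.C c d ∧ (tlt a c ∨ a = c)) ∧
      nlt n a (NTerm.C a b)

section Basics

open List

/-! ### symbol order facts -/

theorem symLt_irrefl (a : NSym) : ¬ symLt a a := by cases a <;> simp [symLt]

theorem symLt_trans {a b c : NSym} (h1 : symLt a b) (h2 : symLt b c) : symLt a c := by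
  cases a <;> cases b <;> cases c <;> simp_all [symLt]

theorem symLt_tri (a b : NSym) : a = b ∨ symLt a b ∨ symLt b a := by
  cases a <;> cases b <;> simp [symLt]

theorem not_symLt_Om_left (a : NSym) : ¬ symLt NSym.Om a := by cases a <;> simp [symLt]

theorem symLt_C_of_ne {b : NSym} (h : b ≠ NSym.C) : symLt NSym.C b := by
  cases b <;> simp_all [symLt]

theorem symLt_zero_right {a : NSym} (h : symLt a NSym.zero) : a = NSym.C := by
  cases a <;> simp_all [symLt]

theorem symLt_zero_left {b : NSym} (h : symLt NSym.zero b) : b = NSym.Om := by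
  cases b <;> simp_all [symLt]

/-! ### Lex facts -/

abbrev LexS := List.Lex symLt

theorem lex_nil_any {t : List NSym} (h : t ≠ []) : LexS [] t := by
  cases t with
  | nil => exact absurd rfl h
  | cons b l => exact List.Lex.nil

theorem lex_irr : ∀ l : List NSym, ¬ LexS l l := by
  intro l h
  induction l with
  | nil => cases h
  | cons a l ih =>
    cases h with
    | rel h' => exact symLt_irrefl a h'
    | cons h' => exact ih h'

theorem lex_trans : ∀ {l₁ l₂ l₃ : List NSym}, LexS l₁ l₂ → LexS l₂ l₃ → LexS l₁ l₃ := by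
  intro l₁
  induction l₁ with
  | nil =>
    intro l₂ l₃ h1 h2
    cases h2 <;> exact List.Lex.nil
  | cons a l ih =>
    intro l₂ l₃ h1 h2
    cases h1 with
    | rel h' =>
      cases h2 with
      | rel h'' => exact List.Lex.rel (symLt_trans h' h'')
      | cons h'' => exact List.Lex.rel h'
    | cons h' =>
      cases h2 with
      | rel h'' => exact List.Lex.rel h''
      | cons h'' => exact List.Lex.cons (ih h' h'')

theorem lex_tri : ∀ (l₁ l₂ : List NSym), l₁ = l₂ ∨ LexS l₁ l₂ ∨ LexS l₂ l₁ := by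
  intro l₁
  induction l₁ with
  | nil =>
    intro l₂
    cases l₂ with
    | nil => exact Or.inl rfl
    | cons b l => exact Or.inr (Or.inl List.Lex.nil)
  | cons a l ih =>
    intro l₂
    cases l₂ with
    | nil => exact Or.inr (Or.inr List.Lex.nil)
    | cons b m =>
      rcases symLt_tri a b with h | h | h
      · subst h
        rcases ih m with h | h | h
        · exact Or.inl (by rw [h])
        · exact Or.inr (Or.inl (List.Lex.cons h))
        · exact Or.inr (Or.inr (List.Lex.cons h))
      · exact Or.inr (Or.inl (List.Lex.rel h))
      · exact Or.inr (Or.inr (List.Lex.rel h))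

theorem lex_append_left : ∀ (l s₁ s₂ : List NSym), LexS s₁ s₂ → LexS (l ++ s₁) (l ++ s₂) := by
  intro l
  induction l with
  | nil => intro s₁ s₂ h; simpa using h
  | cons a l ih => intro s₁ s₂ h; exact List.Lex.cons (ih _ _ h)

theorem lex_prefix : ∀ (l t : List NSym), t ≠ [] → LexS l (l ++ t) := by
  intro l
  induction l with
  | nil => intro t ht; simpa using lex_nil_any ht
  | cons a l ih => intro t ht; exact List.Lex.cons (ih t ht)

theorem lex_snoc_C : ∀ {s₁ s₂ : List NSym}, LexS s₁ s₂ →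
    LexS (s₁ ++ [NSym.C]) (s₂ ++ [NSym.C]) := by
  intro s₁ s₂ h
  induction h with
  | nil =>
    rename_i b l
    by_cases hb : b = NSym.C
    · subst hb
      exact List.Lex.cons (lex_nil_any (by simp))
    · exact List.Lex.rel (symLt_C_of_ne hb)
  | rel h' => exact List.Lex.rel h'
  | cons _ ih => exact List.Lex.cons ih

theorem lex_resolve_r : ∀ (s α δ₁ δ₂ : List NSym), s.length < α.length →
    LexS s (α ++ δ₁) → LexS s (α ++ δ₂) := by
  intro s
  induction s with
  | nil =>
    intro α δ₁ δ₂ hlen _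
    cases α with
    | nil => simp at hlen
    | cons b l => exact List.Lex.nil
  | cons a s ih =>
    intro α δ₁ δ₂ hlen h
    cases α with
    | nil => simp at hlen
    | cons b l =>
      cases h with
      | rel h' => exact List.Lex.rel h'
      | cons h' => exact List.Lex.cons (ih l δ₁ δ₂ (by simpa using Nat.lt_of_succ_lt_succ hlen) h')

theorem not_lex_nil (l : List NSym) : ¬ LexS l [] := by
  intro h; cases h

theorem lex_resolve_l : ∀ (s α δ₁ δ₂ : List NSym), s.length < α.length →
    LexS (α ++ δ₁) s → LexS (α ++ δ₂) s := by
  intro s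
  induction s with
  | nil => intro α δ₁ δ₂ _ h; exact (not_lex_nil _ h).elim
  | cons a s ih =>
    intro α δ₁ δ₂ hlen h
    cases α with
    | nil => simp at hlen
    | cons b l =>
      cases h with
      | rel h' => exact List.Lex.rel h'
      | cons h' => exact List.Lex.cons (ih l δ₁ δ₂ (by simpa using Nat.lt_of_succ_lt_succ hlen) h')

/-- key anti-inversion list lemma: `Ω :: (A ++ X)` is never lex-less than `A`. -/
theorem not_lex_Om_cons : ∀ (A X : List NSym), ¬ LexS (NSym.Om :: (A ++ X)) A := by
  intro A
  induction A with
  | nil => intro X h; cases h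
  | cons a A ih =>
    intro X h
    cases h with
    | rel h' => exact not_symLt_Om_left a h'
    | cons h' =>
      -- heads equal: a = Ω, and tail: LexS (A ++ X) A'?? shape check
      exact ih X h'

end Basics
section Part2
open List

/-! ### postfix facts -/

theorem postfix_ne_nil : ∀ t : NTerm, postfixStr t ≠ [] := by
  intro t
  cases t <;> simp [postfixStr]

theorem postfix_head_const : ∀ t : NTerm, ∃ l, postfixStr t = NSym.zero :: l ∨
    postfixStr t = NSym.Om :: l := by
  intro t
  induction t with
  | zero => exact ⟨[], Or.inl rfl⟩
  | Om => exact ⟨[], Or.inr rfl⟩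
  | C a b iha ihb =>
    obtain ⟨l, hl⟩ := ihb
    rcases hl with h | h
    · exact ⟨l ++ postfixStr a ++ [NSym.C], Or.inl (by simp [postfixStr, h])⟩
    · exact ⟨l ++ postfixStr a ++ [NSym.C], Or.inr (by simp [postfixStr, h])⟩

theorem C_mem_postfix (a b : NTerm) : NSym.C ∈ postfixStr (NTerm.C a b) := by
  simp [postfixStr]

/-! ### PSub facts -/

theorem psub_len : ∀ {z t : NTerm}, PSub z t →
    (postfixStr z).length < (postfixStr t).length := by
  intro z t h
  induction h with
  | left a b =>
    have hb : 0 < (postfixStr b).length := List.length_pos_iff.mpr (postfix_ne_nil b)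
    simp only [postfixStr, List.length_append, List.length_cons, List.length_nil]
    omega
  | right a b =>
    have ha : 0 < (postfixStr a).length := List.length_pos_iff.mpr (postfix_ne_nil a)
    simp only [postfixStr, List.length_append, List.length_cons, List.length_nil]
    omega
  | transLeft x a b _ ih =>
    have hb : 0 < (postfixStr b).length := List.length_pos_iff.mpr (postfix_ne_nil b)
    simp only [postfixStr, List.length_append, List.length_cons, List.length_nil]
    omega
  | transRight x a b _ ih =>
    have ha : 0 < (postfixStr a).length := List.length_pos_iff.mpr (postfix_ne_nil a)
    simp only [postfixStr, List.length_append, List.length_cons, List.length_nil]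
    omega

theorem not_psub_Om {y : NTerm} (h : PSub y NTerm.Om) : False := by cases h

theorem Om_mem_postfix : ∀ t : NTerm, NSym.Om ∈ postfixStr t →
    t = NTerm.Om ∨ PSub NTerm.Om t := by
  intro t
  induction t with
  | zero => intro h; simp [postfixStr] at h
  | Om => intro _; exact Or.inl rfl
  | C a b iha ihb =>
    intro h
    simp only [postfixStr, List.mem_append, List.mem_singleton] at h
    rcases h with (h | h) | h
    · rcases ihb h with rfl | h'
      · exact Or.inr (PSub.right a _)
      · exact Or.inr (PSub.transRight _ a b h')
    · rcases iha h with rfl | h'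
      · exact Or.inr (PSub.left _ b)
      · exact Or.inr (PSub.transLeft _ a b h')
    · simp at h

/-! ### runs -/

def runO : List NSym → ℕ
  | NSym.Om :: l => runO l + 1
  | _ => 0

def runZ : List NSym → ℕ
  | NSym.zero :: l => runZ l + 1
  | _ => 0

@[simp] theorem runO_nil : runO [] = 0 := rfl
@[simp] theorem runO_Om (l : List NSym) : runO (NSym.Om :: l) = runO l + 1 := rfl
@[simp] theorem runO_zero (l : List NSym) : runO (NSym.zero :: l) = 0 := rfl
@[simp] theorem runO_C (l : List NSym) : runO (NSym.C :: l) = 0 := rfl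
@[simp] theorem runZ_nil : runZ [] = 0 := rfl
@[simp] theorem runZ_zero (l : List NSym) : runZ (NSym.zero :: l) = runZ l + 1 := rfl
@[simp] theorem runZ_Om (l : List NSym) : runZ (NSym.Om :: l) = 0 := rfl
@[simp] theorem runZ_C (l : List NSym) : runZ (NSym.C :: l) = 0 := rfl

theorem runO_append_ge : ∀ (X Y : List NSym), runO X ≤ runO (X ++ Y) := by
  intro X Y
  induction X with
  | nil => simp
  | cons a X ih => cases a <;> simp [ih]

theorem runZ_append_ge : ∀ (X Y : List NSym), runZ X ≤ runZ (X ++ Y) := by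
  intro X Y
  induction X with
  | nil => simp
  | cons a X ih => cases a <;> simp [ih]

theorem runO_append_of_C_mem : ∀ (X Y : List NSym), NSym.C ∈ X →
    runO (X ++ Y) = runO X := by
  intro X Y h
  induction X with
  | nil => simp at h
  | cons a X ih =>
    cases a with
    | C => simp
    | zero => simp
    | Om =>
      have : NSym.C ∈ X := by simpa using h
      simp [ih this]

theorem runZ_append_of_C_mem : ∀ (X Y : List NSym), NSym.C ∈ X →
    runZ (X ++ Y) = runZ X := by
  intro X Y h
  induction X with
  | nil => simp at h
  | cons a X ih =>
    cases a with
    | C => simp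
    | Om => simp
    | zero =>
      have : NSym.C ∈ X := by simpa using h
      simp [ih this]

theorem runO_mono : ∀ {X Y : List NSym}, LexS X Y → runO X ≤ runO Y := by
  intro X Y h
  induction h with
  | nil => simp
  | @rel a l₁ b l₂ h' =>
    cases a with
    | Om => exact absurd h' (not_symLt_Om_left b)
    | zero => simp
    | C => simp
  | @cons a l₁ l₂ h' ih =>
    cases a <;> simp [ih]

theorem runZ_mono : ∀ {X Y : List NSym}, LexS X Y → NSym.Om ∉ Y → runZ X ≤ runZ Y := by
  intro X Y h
  induction h with
  | nil => intro _; simp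
  | @rel a l₁ b l₂ h' =>
    intro hy
    cases a with
    | C => simp
    | Om => simp
    | zero =>
      have : b = NSym.Om := symLt_zero_left h'
      subst this
      simp at hy
  | @cons a l₁ l₂ h' ih =>
    intro hy
    cases a with
    | C => simp
    | Om => simp
    | zero =>
      have : NSym.Om ∉ l₂ := fun hm => hy (by simp [hm])
      simp [ih this]

end Part2
section Part3
open List

theorem std_C {n : ℕ} {a b : NTerm} (h : Std n (NTerm.C a b)) :
    Std n a ∧ Std n b ∧
      (b = NTerm.zero ∨ b = NTerm.Om ∨
        ∃ c d : NTerm, b = NTerm.C c d ∧ (tlt a c ∨ a = c)) ∧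
      nlt n a (NTerm.C a b) := h

theorem sub_std {n : ℕ} : ∀ {z t : NTerm}, PSub z t → Std n t → Std n z := by
  intro z t h
  induction h with
  | left a b => intro hs; exact (std_C hs).1
  | right a b => intro hs; exact (std_C hs).2.1
  | transLeft x a b _ ih => intro hs; exact ih (std_C hs).1
  | transRight x a b _ ih => intro hs; exact ih (std_C hs).2.1

/-- transfer `nlt` along a change of bound that preserves the order relation for all
small terms. -/
theorem nlt_transfer : ∀ (k : ℕ) (y b₁ b₂ : NTerm),
    (∀ w : NTerm, (postfixStr w).length ≤ (postfixStr y).length → tlt w b₁ → tlt w b₂) →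
    nlt k y b₁ → nlt k y b₂ := by
  intro k
  induction k with
  | zero =>
    intro y b₁ b₂ H h
    exact H y le_rfl h
  | succ m ih =>
    intro y b₁ b₂ H h
    intro x hx hlt
    obtain ⟨y', hy'x, hy'⟩ := h x hx hlt
    refine ⟨y', hy'x, ih y' b₁ b₂ ?_ hy'⟩
    intro w hw hwb
    refine H w ?_ hwb
    have h1 : (postfixStr y').length < (postfixStr x).length := psub_len hy'x
    have h2 : (postfixStr x).length ≤ (postfixStr y).length := by
      rcases hx with rfl | hx
      · exact le_rfl
      · exact le_of_lt (psub_len hx)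
    omega

/-- chain lemma for `Ω`-runs: in a standard compound term, the run of the whole exceeds
the run of the first argument (provided the whole has positive run). -/
theorem chainO {n : ℕ} : ∀ (d c : NTerm), Std n (NTerm.C c d) →
    1 ≤ runO (postfixStr (NTerm.C c d)) →
    runO (postfixStr c) + 1 ≤ runO (postfixStr (NTerm.C c d)) := by
  intro d
  induction d with
  | zero =>
    intro c _ h1
    simp [postfixStr] at h1
  | Om =>
    intro c _ _
    have : postfixStr (NTerm.C c NTerm.Om) =
        NSym.Om :: (postfixStr c ++ [NSym.C]) := by simp [postfixStr]
    rw [this]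
    simp
    exact runO_append_ge (postfixStr c) [NSym.C]
  | C c' d' ihc ihd =>
    intro c hs h1
    obtain ⟨hsc, hsd, hord, _⟩ := std_C hs
    have hcc' : tlt c c' ∨ c = c' := by
      rcases hord with h | h | ⟨c₀, d₀, heq, hcc⟩
      · exact absurd h (by intro h; cases h)
      · exact absurd h (by intro h; cases h)
      · obtain ⟨h1', h2'⟩ := NTerm.C.inj heq
        subst h1'; subst h2'
        exact hcc
    have hP : postfixStr (NTerm.C c (NTerm.C c' d')) =
        postfixStr (NTerm.C c' d') ++ (postfixStr c ++ [NSym.C]) := by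
      simp [postfixStr]
    have hCd : NSym.C ∈ postfixStr (NTerm.C c' d') := C_mem_postfix c' d'
    have hrun : runO (postfixStr (NTerm.C c (NTerm.C c' d'))) =
        runO (postfixStr (NTerm.C c' d')) := by
      rw [hP, runO_append_of_C_mem _ _ hCd]
    rw [hrun] at h1 ⊢
    have := ihd c' hsd h1
    have hc : runO (postfixStr c) ≤ runO (postfixStr c') := by
      rcases hcc' with h | h
      · exact runO_mono h
      · rw [h]
    omega

/-- chain lemma for `0`-runs (in the `Ω`-free case). -/
theorem chainZ {n : ℕ} : ∀ (d c : NTerm), Std n (NTerm.C c d) →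
    NSym.Om ∉ postfixStr (NTerm.C c d) →
    1 ≤ runZ (postfixStr (NTerm.C c d)) →
    runZ (postfixStr c) + 1 ≤ runZ (postfixStr (NTerm.C c d)) := by
  intro d
  induction d with
  | Om =>
    intro c _ hOm _
    exact absurd (by simp [postfixStr] : NSym.Om ∈ _) hOm
  | zero =>
    intro c _ _ _
    have : postfixStr (NTerm.C c NTerm.zero) =
        NSym.zero :: (postfixStr c ++ [NSym.C]) := by simp [postfixStr]
    rw [this]
    simp
    exact runZ_append_ge (postfixStr c) [NSym.C]
  | C c' d' ihc ihd =>
    intro c hs hOm h1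
    obtain ⟨hsc, hsd, hord, _⟩ := std_C hs
    have hcc' : tlt c c' ∨ c = c' := by
      rcases hord with h | h | ⟨c₀, d₀, heq, hcc⟩
      · exact absurd h (by intro h; cases h)
      · exact absurd h (by intro h; cases h)
      · obtain ⟨h1', h2'⟩ := NTerm.C.inj heq
        subst h1'; subst h2'
        exact hcc
    have hP : postfixStr (NTerm.C c (NTerm.C c' d')) =
        postfixStr (NTerm.C c' d') ++ (postfixStr c ++ [NSym.C]) := by
      simp [postfixStr]
    have hCd : NSym.C ∈ postfixStr (NTerm.C c' d') := C_mem_postfix c' d'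
    have hrun : runZ (postfixStr (NTerm.C c (NTerm.C c' d'))) =
        runZ (postfixStr (NTerm.C c' d')) := by
      rw [hP, runZ_append_of_C_mem _ _ hCd]
    have hOmd : NSym.Om ∉ postfixStr (NTerm.C c' d') := by
      intro hm; exact hOm (by rw [hP]; exact List.mem_append_left _ hm)
    have hOmc : NSym.Om ∉ postfixStr c' := by
      intro hm
      exact hOmd (by simp [postfixStr, hm])
    rw [hrun] at h1 ⊢
    have := ihd c' hsd hOmd h1
    have hc : runZ (postfixStr c) ≤ runZ (postfixStr c') := by
      rcases hcc' with h | h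
      · exact runZ_mono h hOmc
      · rw [h]
    omega

/-- **Key inversion lemma.** If `C u s < u`, where `s` is standard and satisfies the
order condition relative to `u`, then the postfix of `s` begins with `0` and the symbol
`Ω` occurs in `P s ++ P u`. -/
theorem v6 {n : ℕ} (u s : NTerm)
    (hord : s = NTerm.zero ∨ s = NTerm.Om ∨
      ∃ c d : NTerm, s = NTerm.C c d ∧ (tlt u c ∨ u = c))
    (hs : Std n s)
    (hyp : tlt (NTerm.C u s) u) :
    (∃ l, postfixStr s = NSym.zero :: l) ∧
      NSym.Om ∈ postfixStr s ++ postfixStr u := by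
  have hyp' : LexS (postfixStr s ++ (postfixStr u ++ [NSym.C])) (postfixStr u) := by
    have : postfixStr (NTerm.C u s) =
        postfixStr s ++ (postfixStr u ++ [NSym.C]) := by simp [postfixStr]
    rw [← this]; exact hyp
  -- part (a): the head of `P s` is `0`
  obtain ⟨l₀, hl₀⟩ := postfix_head_const s
  have ha : postfixStr s = NSym.zero :: l₀ := by
    rcases hl₀ with h | h
    · exact h
    · -- head `Ω`: derive a contradiction
      exfalso
      cases s with
      | zero => simp [postfixStr] at h
      | Om =>
        have : LexS (NSym.Om :: (postfixStr u ++ [NSym.C])) (postfixStr u) := by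
          simpa [postfixStr] using hyp'
        exact not_lex_Om_cons (postfixStr u) [NSym.C] this
      | C c d =>
        rcases hord with h' | h' | ⟨c, d, heq, hoc⟩
        · cases h'
        · cases h'
        obtain ⟨rfl, rfl⟩ := NTerm.C.inj heq
        have hrunS : 1 ≤ runO (postfixStr (NTerm.C c d)) := by
          rw [h]; simp
        have hchain := chainO (n := n) d c hs hrunS
        have hle1 : runO (postfixStr (NTerm.C c d)) ≤
            runO (postfixStr (NTerm.C c d) ++ (postfixStr u ++ [NSym.C])) :=
          runO_append_ge _ _
        have hle2 : runO (postfixStr (NTerm.C c d) ++ (postfixStr u ++ [NSym.C])) ≤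
            runO (postfixStr u) := runO_mono hyp'
        have hle3 : runO (postfixStr u) ≤ runO (postfixStr c) := by
          rcases hoc with h' | h'
          · exact runO_mono h'
          · rw [h']
        omega
  refine ⟨⟨l₀, ha⟩, ?_⟩
  -- part (b)
  by_contra hOm
  have hOmS : NSym.Om ∉ postfixStr s := fun hm => hOm (List.mem_append_left _ hm)
  have hOmU : NSym.Om ∉ postfixStr u := fun hm => hOm (List.mem_append_right _ hm)
  cases s with
  | Om => exact hOmS (by simp [postfixStr])
  | zero =>
    have hyp0 : LexS (NSym.zero :: (postfixStr u ++ [NSym.C])) (postfixStr u) := by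
      simpa [postfixStr] using hyp'
    have h1 : runZ (NSym.zero :: (postfixStr u ++ [NSym.C])) ≤ runZ (postfixStr u) :=
      runZ_mono hyp0 hOmU
    have h2 : runZ (postfixStr u) ≤ runZ (postfixStr u ++ [NSym.C]) :=
      runZ_append_ge _ _
    simp at h1
    omega
  | C c d =>
    rcases hord with h' | h' | ⟨c, d, heq, hoc⟩
    · cases h'
    · cases h'
    obtain ⟨rfl, rfl⟩ := NTerm.C.inj heq
    have hOmC : NSym.Om ∉ postfixStr c := by
      intro hm
      exact hOmS (by simp [postfixStr, hm])
    have hrunS : 1 ≤ runZ (postfixStr (NTerm.C c d)) := by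
      rw [ha]; simp
    have hchain := chainZ (n := n) d c hs hOmS hrunS
    have hle1 : runZ (postfixStr (NTerm.C c d)) ≤
        runZ (postfixStr (NTerm.C c d) ++ (postfixStr u ++ [NSym.C])) :=
      runZ_append_ge _ _
    have hle2 : runZ (postfixStr (NTerm.C c d) ++ (postfixStr u ++ [NSym.C])) ≤
        runZ (postfixStr u) := by
      refine runZ_mono hyp' hOmU
    have hle3 : runZ (postfixStr u) ≤ runZ (postfixStr c) := by
      rcases hoc with h' | h'
      · exact runZ_mono h' hOmC
      · rw [h']
    omega

end Part3
section Part4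
open List

/-- The fold of a nonempty suffix of the prefix form of `a`. -/
inductive Fold : NTerm → NTerm → Prop
  | whole (x : NTerm) : Fold x x
  | right (x y t : NTerm) : Fold y t → Fold (NTerm.C x y) t
  | left (x y t : NTerm) : Fold x t → Fold (NTerm.C x y) (NTerm.C t y)

theorem fold_std (m : ℕ) : ∀ {a t : NTerm}, Fold a t → Std (m + 1) a →
    Std (m + 1) t ∧ (t = a ∨ tlt t a) ∧
    ∃ σ k r, postfixStr t = σ ++ List.replicate k NSym.C ∧
      postfixStr a = σ ++ r ∧ σ ≠ [] ∧
      (∀ z, PSub z t → (PSub z a ∧ (postfixStr z).length < σ.length) ∨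
        (∃ t' s', t = NTerm.C t' s' ∧
          (postfixStr z = postfixStr t' ∨ tlt z t'))) := by
  intro a t hf
  induction hf with
  | whole x =>
    intro hs
    refine ⟨hs, Or.inl rfl, postfixStr x, 0, [], by simp, by simp, postfix_ne_nil x, ?_⟩
    intro z hz
    exact Or.inl ⟨hz, psub_len hz⟩
  | right x y t hf ih =>
    intro hs
    obtain ⟨hsx, hsy, hord, hnlt⟩ := std_C hs
    obtain ⟨hst, hle, σ, k, r, hPt, hPy, hσ, hdic⟩ := ih hsy
    have hyC : tlt y (NTerm.C x y) := by
      show LexS (postfixStr y) (postfixStr (NTerm.C x y))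
      have : postfixStr (NTerm.C x y) = postfixStr y ++ (postfixStr x ++ [NSym.C]) := by
        simp [postfixStr]
      rw [this]
      exact lex_prefix _ _ (by simp)
    refine ⟨hst, ?_, σ, k, r ++ (postfixStr x ++ [NSym.C]), hPt, ?_, hσ, ?_⟩
    · rcases hle with rfl | hlt
      · exact Or.inr hyC
      · exact Or.inr (lex_trans hlt hyC)
    · simp [postfixStr, hPy]
    · intro z hz
      rcases hdic z hz with ⟨hzy, hlen⟩ | hsp
      · exact Or.inl ⟨PSub.transRight _ _ _ hzy, hlen⟩
      · exact Or.inr hsp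
  | left x y t hf ih =>
    intro hs
    obtain ⟨hsx, hsy, hord, hnlt⟩ := std_C hs
    obtain ⟨hst, hle, σ, k, r, hPt, hPx, hσ, hdic⟩ := ih hsx
    have hnlt' : ∀ x', (x' = x ∨ PSub x' x) → tlt x x' →
        ∃ y', PSub y' x' ∧ nlt m y' (NTerm.C x y) := hnlt
    -- no top inversion in t
    have hNTI : ∀ t' s', t = NTerm.C t' s' → ¬ tlt t t' := by
      intro t' s' ht hinv
      have hstC : Std (m + 1) (NTerm.C t' s') := ht ▸ hst
      obtain ⟨hst', hss', hord', _⟩ := std_C hstC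
      have hyp : tlt (NTerm.C t' s') t' := ht ▸ hinv
      obtain ⟨⟨l₀, hPs'⟩, hOmMem⟩ := v6 (n := m + 1) t' s' hord' hss' hyp
      -- Ω occurs in the postfix of t
      have hOmt : NSym.Om ∈ postfixStr t := by
        rw [ht]
        simp only [postfixStr, List.mem_append]
        rcases List.mem_append.mp hOmMem with h | h
        · exact Or.inl (Or.inl h)
        · exact Or.inl (Or.inr h)
      -- Ω occurs in σ
      have hOmσ : NSym.Om ∈ σ := by
        have := hPt ▸ hOmt
        rcases List.mem_append.mp this with h | h
        · exact h
        · exact absurd (List.eq_of_mem_replicate h) (by simp)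
      -- Ω occurs in the postfix of x
      have hOmx : NSym.Om ∈ postfixStr x := by
        rw [hPx]; exact List.mem_append_left _ hOmσ
      -- σ starts with the symbol 0
      obtain ⟨aσ, σ', rfl⟩ : ∃ aσ σ', σ = aσ :: σ' := by
        cases σ with
        | nil => exact absurd rfl hσ
        | cons aσ σ' => exact ⟨aσ, σ', rfl⟩
      have he : (aσ :: σ') ++ List.replicate k NSym.C =
          NSym.zero :: (l₀ ++ (postfixStr t' ++ [NSym.C])) := by
        rw [← hPt, ht]
        simp [postfixStr, hPs']
      have haσ : aσ = NSym.zero := by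
        have := List.head_eq_of_cons_eq (by simpa using he)
        exact this
      subst haσ
      -- x is lex-below Ω and has Ω as a proper subterm
      have hxOm : tlt x NTerm.Om := by
        show LexS (postfixStr x) (postfixStr NTerm.Om)
        rw [hPx]
        exact List.Lex.rel (by trivial)
      have hPSubOm : PSub NTerm.Om x := by
        rcases Om_mem_postfix x hOmx with hx | hx
        · rw [hx] at hPx
          simp [postfixStr] at hPx
        · exact hx
      obtain ⟨y', hy', _⟩ := hnlt' NTerm.Om (Or.inr hPSubOm) hxOm
      exact not_psub_Om hy'
    -- the new standard term
    have hstd_new : Std (m + 1) (NTerm.C t y) := by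
      refine ⟨hst, hsy, ?_, ?_⟩
      · rcases hord with h | h | ⟨c, d, hy, hxc⟩
        · exact Or.inl h
        · exact Or.inr (Or.inl h)
        · refine Or.inr (Or.inr ⟨c, d, hy, ?_⟩)
          rcases hle with rfl | hlt
          · exact hxc
          · rcases hxc with h' | h'
            · exact Or.inl (lex_trans hlt h')
            · exact Or.inl (h' ▸ hlt)
      · -- nlt (m+1) t (C t y)
        intro z hz hlt
        rcases hz with rfl | hsub
        · exact absurd hlt (lex_irr _)
        rcases hdic z hsub with ⟨hzx, hlen⟩ | ⟨t', s', ht, hzle⟩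
        · -- z sits inside σ : transfer from the standardness of x
          have htxz : tlt x z := by
            have h1 : LexS (postfixStr t) (postfixStr z) := hlt
            rw [hPt] at h1
            have h2 : LexS (σ ++ r) (postfixStr z) :=
              lex_resolve_l _ σ _ _ hlen h1
            show LexS (postfixStr x) (postfixStr z)
            rw [hPx]
            exact h2
          obtain ⟨y', hy'z, hy'n⟩ := hnlt' z (Or.inr hzx) htxz
          refine ⟨y', hy'z, ?_⟩
          refine nlt_transfer m y' (NTerm.C x y) (NTerm.C t y) ?_ hy'n
          intro w hw hwb
          have hlw : (postfixStr w).length < (postfixStr y ++ σ).length := by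
            have := psub_len hy'z
            simp only [List.length_append]
            omega
          have e1 : postfixStr (NTerm.C x y) =
              (postfixStr y ++ σ) ++ (r ++ [NSym.C]) := by
            simp [postfixStr, hPx]
          have e2 : postfixStr (NTerm.C t y) =
              (postfixStr y ++ σ) ++ (List.replicate k NSym.C ++ [NSym.C]) := by
            simp [postfixStr, hPt]
          have hwb' : LexS (postfixStr w)
              ((postfixStr y ++ σ) ++ (r ++ [NSym.C])) := by
            have h0 : LexS (postfixStr w) (postfixStr (NTerm.C x y)) := hwb
            rw [e1] at h0
            exact h0
          have hres := lex_resolve_r _ _ _ (List.replicate k NSym.C ++ [NSym.C]) hlw hwb'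
          show LexS (postfixStr w) (postfixStr (NTerm.C t y))
          rw [e2]
          exact hres
        · -- z on the fold spine : impossible since it would be a top inversion
          exfalso
          have hlt' : LexS (postfixStr t) (postfixStr z) := hlt
          have h1 := hNTI t' s' ht
          have ht'le : postfixStr t' = postfixStr t ∨
              LexS (postfixStr t') (postfixStr t) := by
            rcases lex_tri (postfixStr t') (postfixStr t) with heq | hl | hg
            · exact Or.inl heq
            · exact Or.inr hl
            · exact absurd hg h1
          have step1 : LexS (postfixStr t) (postfixStr t') := by
            rcases hzle with h2 | h2
            · rw [h2] at hlt'; exact hlt'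
            · exact lex_trans hlt' h2
          have step2 : LexS (postfixStr t) (postfixStr t) := by
            rcases ht'le with h3 | h3
            · rw [h3] at step1; exact step1
            · exact lex_trans step1 h3
          exact lex_irr _ step2
    refine ⟨hstd_new, ?_, postfixStr y ++ σ, k + 1, r ++ [NSym.C], ?_, ?_, by simp [hσ], ?_⟩
    · -- t ≤ a
      rcases hle with rfl | hlt
      · exact Or.inl rfl
      · refine Or.inr ?_
        show LexS (postfixStr (NTerm.C t y)) (postfixStr (NTerm.C x y))
        have e1 : postfixStr (NTerm.C t y) =
            postfixStr y ++ (postfixStr t ++ [NSym.C]) := by simp [postfixStr]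
        have e2 : postfixStr (NTerm.C x y) =
            postfixStr y ++ (postfixStr x ++ [NSym.C]) := by simp [postfixStr]
        rw [e1, e2]
        exact lex_append_left _ _ _ (lex_snoc_C hlt)
    · simp [postfixStr, hPt, List.replicate_succ']
    · simp [postfixStr, hPx]
    · intro z hz
      cases hz with
      | left => exact Or.inr ⟨t, y, rfl, Or.inl rfl⟩
      | right =>
        refine Or.inl ⟨PSub.right x y, ?_⟩
        have : 0 < σ.length := List.length_pos_iff.mpr hσ
        simp only [List.length_append]
        omega
      | transLeft z _ _ hzt =>
        rcases hdic z hzt with ⟨hzx, hlen⟩ | ⟨t', s', ht, hzle⟩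
        · refine Or.inl ⟨PSub.transLeft _ _ _ hzx, ?_⟩
          simp only [List.length_append]
          omega
        · refine Or.inr ⟨t, y, rfl, ?_⟩
          have h1 := hNTI t' s' ht
          rcases lex_tri (postfixStr t') (postfixStr t) with heq | hlt' | hgt
          · rcases hzle with h2 | h2
            · exact Or.inl (h2.trans heq)
            · exact Or.inr (show LexS (postfixStr z) (postfixStr t) from heq ▸ h2)
          · rcases hzle with h2 | h2
            · exact Or.inr (show LexS (postfixStr z) (postfixStr t) from h2 ▸ hlt')
            · exact Or.inr (lex_trans h2 hlt')
          · exact absurd hgt h1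
      | transRight z _ _ hzy =>
        refine Or.inl ⟨PSub.transRight _ _ _ hzy, ?_⟩
        have := psub_len hzy
        simp only [List.length_append]
        omega

end Part4
section Part5
open List

theorem suffix_append_split : ∀ (l₁ l₂ v : List NSym), v <:+ l₁ ++ l₂ →
    v <:+ l₂ ∨ ∃ w, w ≠ [] ∧ w <:+ l₁ ∧ v = w ++ l₂ := by
  intro l₁
  induction l₁ with
  | nil => intro l₂ v h; exact Or.inl (by simpa using h)
  | cons a l₁ ih =>
    intro l₂ v h
    rw [List.cons_append, List.suffix_cons_iff] at h
    rcases h with rfl | h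
    · exact Or.inr ⟨a :: l₁, by simp, List.suffix_refl _, rfl⟩
    · rcases ih l₂ v h with h' | ⟨w, hne, hsuf, rfl⟩
      · exact Or.inl h'
      · exact Or.inr ⟨w, hne, hsuf.trans (List.suffix_cons a l₁), rfl⟩

theorem fold_exists : ∀ (a : NTerm) (v : List NSym), v ≠ [] → v <:+ prefixStr a →
    ∃ t j, Fold a t ∧ prefixStr t = List.replicate j NSym.C ++ v := by
  intro a
  induction a with
  | zero =>
    intro v hv hsuf
    rw [show prefixStr NTerm.zero = [NSym.zero] from rfl, List.suffix_cons_iff] at hsuf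
    rcases hsuf with rfl | h
    · exact ⟨NTerm.zero, 0, Fold.whole _, by simp [prefixStr]⟩
    · exact absurd (List.suffix_nil.mp h) hv
  | Om =>
    intro v hv hsuf
    rw [show prefixStr NTerm.Om = [NSym.Om] from rfl, List.suffix_cons_iff] at hsuf
    rcases hsuf with rfl | h
    · exact ⟨NTerm.Om, 0, Fold.whole _, by simp [prefixStr]⟩
    · exact absurd (List.suffix_nil.mp h) hv
  | C x y ihx ihy =>
    intro v hv hsuf
    rw [show prefixStr (NTerm.C x y) = NSym.C :: (prefixStr x ++ prefixStr y) from rfl,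
      List.suffix_cons_iff] at hsuf
    rcases hsuf with rfl | h
    · exact ⟨NTerm.C x y, 0, Fold.whole _, by simp [prefixStr]⟩
    · rcases suffix_append_split _ _ _ h with h' | ⟨w, hne, hw, rfl⟩
      · obtain ⟨t, j, hf, hp⟩ := ihy v hv h'
        exact ⟨t, j, Fold.right x y t hf, hp⟩
      · obtain ⟨t₁, j, hf, hp⟩ := ihx w hne hw
        refine ⟨NTerm.C t₁ y, j + 1, Fold.left x y t₁ hf, ?_⟩
        show NSym.C :: (prefixStr t₁ ++ prefixStr y) = _
        rw [hp]
        simp [List.replicate_succ, List.append_assoc]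

end Part5

theorem suffix_of_standard_is_standard (n : ℕ) (hn : 0 < n)
    (a : NTerm) (ha : Std n a) (v : List NSym) (hv : v ≠ [])
    (hsuf : v <:+ prefixStr a) :
    ∃ (j : ℕ) (t : NTerm), Std n t ∧ prefixStr t = List.replicate j NSym.C ++ v := by
  obtain ⟨m, rfl⟩ : ∃ m, n = m + 1 := by
    cases n with
    | zero => exact absurd hn (by simp)
    | succ m => exact ⟨m, rfl⟩
  obtain ⟨t, j, hf, hp⟩ := fold_exists a v hv hsuf
  obtain ⟨hstd, -⟩ := fold_std m hf ha
  exact ⟨j, t, hstd, hp⟩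
end
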